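/- arXiv:2110.12933 — 7 statements merged into one kernel-verified Lean document; each statement's English description precedes it below -/
import Mathlib

section
/- Let K be a field and X = {x₁,…,xₙ}. Let I_ρ = (f₁,…,f_r)_ρ and J_ρ = (g₁,…,g_s)_ρ be finitely generated right ideals of K⟨X⟩. Let t be a new indeterminate, ι: K⟨X⟩ → K⟨X ∪ {t}⟩ the canonical embedding, and let H_ρ be the right ideal of K⟨X ∪ {t}⟩ generated by {t·ι(fᵢ) : 1 ≤ i ≤ r} ∪ {(1 − t)·ι(gⱼ) : 1 ≤ j ≤ s}. Then for every h ∈ K⟨X⟩: h ∈ I_ρ ∩ J_ρ if and only if ι(h) ∈ H_ρ. -/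
open scoped BigOperators

/-- The right ideal generated by a set `S`, i.e. the set of finite sums `∑ fᵢ * qᵢ`
with `fᵢ ∈ S` and `qᵢ` arbitrary ring elements. -/
def rightIdealSpan {A : Type*} [Semiring A] (S : Set A) : Set A :=
  {x | ∃ (d : ℕ) (f q : Fin d → A), (∀ i, f i ∈ S) ∧ x = ∑ i, f i * q i}

/-- The canonical embedding `K⟨x₁,…,xₙ⟩ → K⟨x₁,…,xₙ,t⟩` sending each `xᵢ` to `xᵢ`. -/
noncomputable def emb (K : Type*) [Field K] (n : ℕ) :
    FreeAlgebra K (Fin n) →ₐ[K] FreeAlgebra K (Fin (n + 1)) :=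
  FreeAlgebra.lift K fun i => FreeAlgebra.ι K i.castSucc

lemma mem_rightIdealSpan_range_iff {A : Type*} [Semiring A] {ι : Type*} [Fintype ι]
    (v : ι → A) (x : A) :
    x ∈ rightIdealSpan (Set.range v) ↔ ∃ q : ι → A, x = ∑ i, v i * q i := by
  classical
  constructor
  · rintro ⟨d, F, Q, hF, rfl⟩
    choose c hc using hF
    refine ⟨fun j => ∑ i ∈ Finset.univ.filter (fun i => c i = j), Q i, ?_⟩
    rw [Finset.sum_congr rfl (fun i _ => by rw [← hc i]),
      ← Finset.sum_fiberwise Finset.univ c (fun i => v (c i) * Q i)]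
    refine Finset.sum_congr rfl fun j _ => ?_
    rw [Finset.mul_sum]
    refine Finset.sum_congr rfl fun i hi => ?_
    simp only [Finset.mem_filter] at hi
    rw [hi.2]
  · rintro ⟨q, rfl⟩
    let e := (Fintype.equivFin ι).symm
    exact ⟨Fintype.card ι, v ∘ e, q ∘ e, fun i => ⟨e i, rfl⟩,
      (Equiv.sum_comp e (fun i => v i * q i)).symm⟩

/-- Projection `K⟨X ∪ {t}⟩ → K⟨X⟩` sending `t ↦ c` and fixing the `xᵢ`. -/
noncomputable def projTag (K : Type*) [Field K] (n : ℕ) (c : FreeAlgebra K (Fin n)) :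
    FreeAlgebra K (Fin (n + 1)) →ₐ[K] FreeAlgebra K (Fin n) :=
  FreeAlgebra.lift K (Fin.lastCases c (FreeAlgebra.ι K))

lemma projTag_emb (K : Type*) [Field K] (n : ℕ) (c : FreeAlgebra K (Fin n))
    (a : FreeAlgebra K (Fin n)) : projTag K n c (emb K n a) = a := by
  have : (projTag K n c).comp (emb K n) = AlgHom.id K _ := by
    apply FreeAlgebra.hom_ext
    funext i
    simp [projTag, emb]
  exact AlgHom.congr_fun this a

lemma projTag_t (K : Type*) [Field K] (n : ℕ) (c : FreeAlgebra K (Fin n)) :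
    projTag K n c (FreeAlgebra.ι K (Fin.last n)) = c := by
  simp [projTag]

/-- **Intersection of two finitely generated right ideals via a tag variable.**
With `I_ρ = (f₁,…,f_r)_ρ`, `J_ρ = (g₁,…,g_s)_ρ ⊆ K⟨X⟩`, `t` the extra indeterminate of
`K⟨X ∪ {t}⟩` and `H_ρ = (t·ι(fᵢ), (1−t)·ι(gⱼ))_ρ`, for every `h ∈ K⟨X⟩` we have
`h ∈ I_ρ ∩ J_ρ ↔ ι(h) ∈ H_ρ`. -/
theorem rightIdeal_intersection_tag (K : Type*) [Field K] (n r s : ℕ)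
    (f : Fin r → FreeAlgebra K (Fin n)) (g : Fin s → FreeAlgebra K (Fin n))
    (h : FreeAlgebra K (Fin n)) :
    h ∈ rightIdealSpan (Set.range f) ∩ rightIdealSpan (Set.range g) ↔
      emb K n h ∈ rightIdealSpan
        ((Set.range fun i => FreeAlgebra.ι K (Fin.last n) * emb K n (f i)) ∪
          (Set.range fun j => (1 - FreeAlgebra.ι K (Fin.last n)) * emb K n (g j))) := by
  classical
  set t := FreeAlgebra.ι K (Fin.last n) with ht
  rw [← Set.Sum.elim_range, mem_rightIdealSpan_range_iff, Set.mem_inter_iff,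
    mem_rightIdealSpan_range_iff, mem_rightIdealSpan_range_iff]
  constructor
  · rintro ⟨⟨q, hq⟩, ⟨p, hp⟩⟩
    refine ⟨Sum.elim (fun i => emb K n (q i)) (fun j => emb K n (p j)), ?_⟩
    rw [Fintype.sum_sum_type]
    simp only [Sum.elim_inl, Sum.elim_inr]
    have key : emb K n h = t * emb K n h + (1 - t) * emb K n h := by noncomm_ring
    rw [key]
    congr 1
    · rw [hq, map_sum, Finset.mul_sum]
      exact Finset.sum_congr rfl fun i _ => by rw [map_mul, mul_assoc]
    · rw [hp, map_sum, Finset.mul_sum]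
      exact Finset.sum_congr rfl fun j _ => by rw [map_mul, mul_assoc]
  · rintro ⟨q, hq⟩
    constructor
    · refine ⟨fun i => projTag K n 1 (q (Sum.inl i)), ?_⟩
      have := congrArg (projTag K n 1) hq
      rw [projTag_emb] at this
      rw [this, map_sum, Fintype.sum_sum_type]
      simp [ht, map_mul, projTag_emb, projTag_t, mul_assoc]
    · refine ⟨fun j => projTag K n 0 (q (Sum.inr j)), ?_⟩
      have := congrArg (projTag K n 0) hq
      rw [projTag_emb] at this
      rw [this, map_sum, Fintype.sum_sum_type]
      simp [ht, map_mul, projTag_emb, projTag_t, mul_assoc]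
end

section
/- Let K be a field and X = {x₁,…,xₙ}. Let I = (f₁,…,f_r) and J = (g₁,…,g_s) be finitely generated two-sided ideals of K⟨X⟩. Let t be a new indeterminate, ι: K⟨X⟩ → K⟨X ∪ {t}⟩ the canonical embedding, and let H be the two-sided ideal of K⟨X ∪ {t}⟩ generated by {t·ι(fᵢ) : 1 ≤ i ≤ r} ∪ {(1 − t)·ι(gⱼ) : 1 ≤ j ≤ s} ∪ {t·ι(x_k) − ι(x_k)·t : 1 ≤ k ≤ n}. Then for every h ∈ K⟨X⟩: h ∈ I ∩ J if and only if ι(h) ∈ H. -/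
open scoped BigOperators

/-- The two-sided ideal generated by a set `S`, i.e. the set of finite sums
`∑ pᵢ * fᵢ * qᵢ` with `fᵢ ∈ S` and `pᵢ, qᵢ` arbitrary ring elements. -/
def idealSpan {A : Type*} [Semiring A] (S : Set A) : Set A :=
  {x | ∃ (d : ℕ) (p f q : Fin d → A), (∀ i, f i ∈ S) ∧ x = ∑ i, p i * f i * q i}

section idealSpanLemmas

variable {A : Type*} [Ring A] {S : Set A}

lemma idealSpan_zero_mem : (0 : A) ∈ idealSpan S :=
  ⟨0, Fin.elim0, Fin.elim0, Fin.elim0, fun i => i.elim0, by simp⟩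

lemma idealSpan_single_mem {p a q : A} (ha : a ∈ S) : p * a * q ∈ idealSpan S :=
  ⟨1, fun _ => p, fun _ => a, fun _ => q, fun _ => ha, by simp⟩

lemma idealSpan_add_mem {x y : A} (hx : x ∈ idealSpan S) (hy : y ∈ idealSpan S) :
    x + y ∈ idealSpan S := by
  obtain ⟨d1, p1, f1, q1, hf1, rfl⟩ := hx
  obtain ⟨d2, p2, f2, q2, hf2, rfl⟩ := hy
  refine ⟨d1 + d2, Fin.addCases p1 p2, Fin.addCases f1 f2, Fin.addCases q1 q2, ?_, ?_⟩
  · intro i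
    refine Fin.addCases (motive := fun i => Fin.addCases (motive := fun _ => A) f1 f2 i ∈ S)
      (fun i => ?_) (fun i => ?_) i
    · simpa using hf1 i
    · simpa using hf2 i
  · rw [Fin.sum_univ_add]
    simp

lemma idealSpan_neg_mem {x : A} (hx : x ∈ idealSpan S) : -x ∈ idealSpan S := by
  obtain ⟨d, p, f, q, hf, rfl⟩ := hx
  exact ⟨d, fun i => -p i, f, q, hf, by simp [Finset.sum_neg_distrib]⟩

/-- `idealSpan S` coincides with the two-sided ideal generated by `S`. -/
lemma idealSpan_eq_span (S : Set A) : idealSpan S = (TwoSidedIdeal.span S : Set A) := by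
  ext z
  constructor
  · rintro ⟨d, p, f, q, hf, rfl⟩
    exact TwoSidedIdeal.finsetSum_mem _ _ _ fun i _ =>
      TwoSidedIdeal.mul_mem_right _ _ _
        (TwoSidedIdeal.mul_mem_left _ _ _ (TwoSidedIdeal.subset_span (hf i)))
  · intro hz
    rw [SetLike.mem_coe, TwoSidedIdeal.mem_span_iff_mem_addSubgroup_closure] at hz
    refine AddSubgroup.closure_induction ?_ idealSpan_zero_mem
      (fun x y _ _ hx hy => idealSpan_add_mem hx hy)
      (fun x _ hx => idealSpan_neg_mem hx) hz
    rintro x hx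
    rw [Set.mem_mul] at hx
    obtain ⟨y, hy, q, -, rfl⟩ := hx
    rw [Set.mem_mul] at hy
    obtain ⟨p, -, a, ha, rfl⟩ := hy
    exact idealSpan_single_mem ha

end idealSpanLemmas

/-- Retraction `K⟨x₁,…,xₙ,t⟩ → K⟨x₁,…,xₙ⟩` sending `t` to `c` and each `xᵢ` to itself. -/
noncomputable def retr (K : Type*) [Field K] (n : ℕ) (c : FreeAlgebra K (Fin n)) :
    FreeAlgebra K (Fin (n + 1)) →ₐ[K] FreeAlgebra K (Fin n) :=
  FreeAlgebra.lift K fun i => Fin.lastCases c (fun k => FreeAlgebra.ι K k) i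

@[simp] lemma retr_last {K : Type*} [Field K] {n : ℕ} (c : FreeAlgebra K (Fin n)) :
    retr K n c (FreeAlgebra.ι K (Fin.last n)) = c := by
  simp [retr]

@[simp] lemma retr_castSucc {K : Type*} [Field K] {n : ℕ} (c : FreeAlgebra K (Fin n))
    (k : Fin n) : retr K n c (FreeAlgebra.ι K k.castSucc) = FreeAlgebra.ι K k := by
  simp [retr]

@[simp] lemma retr_emb {K : Type*} [Field K] {n : ℕ} (c : FreeAlgebra K (Fin n))
    (u : FreeAlgebra K (Fin n)) : retr K n c (emb K n u) = u := by
  induction u with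
  | grade0 r => simp [emb]
  | grade1 i => simp [emb]
  | mul a b ha hb => simp [ha, hb]
  | add a b ha hb => simp [ha, hb]

/-- **Intersection of two finitely generated two-sided ideals via a central tag variable.**
With `I = (f₁,…,f_r)`, `J = (g₁,…,g_s) ⊆ K⟨X⟩`, `t` the extra indeterminate of
`K⟨X ∪ {t}⟩` and `H = (t·ι(fᵢ), (1−t)·ι(gⱼ), t·ι(x_k) − ι(x_k)·t)`, for every `h ∈ K⟨X⟩`
we have `h ∈ I ∩ J ↔ ι(h) ∈ H`. -/
theorem ideal_intersection_tag (K : Type*) [Field K] (n r s : ℕ)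
    (f : Fin r → FreeAlgebra K (Fin n)) (g : Fin s → FreeAlgebra K (Fin n))
    (h : FreeAlgebra K (Fin n)) :
    h ∈ idealSpan (Set.range f) ∩ idealSpan (Set.range g) ↔
      emb K n h ∈ idealSpan
        ((Set.range fun i => FreeAlgebra.ι K (Fin.last n) * emb K n (f i)) ∪
          (Set.range fun j => (1 - FreeAlgebra.ι K (Fin.last n)) * emb K n (g j)) ∪
          (Set.range fun k : Fin n =>
            FreeAlgebra.ι K (Fin.last n) * FreeAlgebra.ι K k.castSucc -
              FreeAlgebra.ι K k.castSucc * FreeAlgebra.ι K (Fin.last n))) := by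
  set t : FreeAlgebra K (Fin (n + 1)) := FreeAlgebra.ι K (Fin.last n) with ht
  set S : Set (FreeAlgebra K (Fin (n + 1))) :=
    ((Set.range fun i => t * emb K n (f i)) ∪
      (Set.range fun j => (1 - t) * emb K n (g j)) ∪
      (Set.range fun k : Fin n =>
        t * FreeAlgebra.ι K k.castSucc - FreeAlgebra.ι K k.castSucc * t)) with hS
  rw [idealSpan_eq_span, idealSpan_eq_span, idealSpan_eq_span]
  set H := TwoSidedIdeal.span S with hH
  -- the tag variable commutes with everything from `K⟨X⟩` modulo `H`
  have hcomm : ∀ u : FreeAlgebra K (Fin n), t * emb K n u - emb K n u * t ∈ H := by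
    intro u
    induction u with
    | grade0 a =>
        rw [AlgHom.commutes]
        rw [Algebra.commutes]
        simpa using H.zero_mem
    | grade1 i =>
        refine TwoSidedIdeal.subset_span ?_
        rw [hS]
        simp only [emb, FreeAlgebra.lift_ι_apply]
        exact Set.mem_union_right _ ⟨i, rfl⟩
    | mul a b ha hb =>
        have key : t * emb K n (a * b) - emb K n (a * b) * t =
            (t * emb K n a - emb K n a * t) * emb K n b +
              emb K n a * (t * emb K n b - emb K n b * t) := by
          rw [map_mul]; noncomm_ring
        rw [key]
        exact H.add_mem (H.mul_mem_right _ _ ha) (H.mul_mem_left _ _ hb)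
    | add a b ha hb =>
        have key : t * emb K n (a + b) - emb K n (a + b) * t =
            (t * emb K n a - emb K n a * t) + (t * emb K n b - emb K n b * t) := by
          rw [map_add]; noncomm_ring
        rw [key]
        exact H.add_mem ha hb
  constructor
  · rintro ⟨hI, hJ⟩
    -- t * emb u ∈ H for all u ∈ span (range f)
    have h1 : ∀ u ∈ TwoSidedIdeal.span (Set.range f), t * emb K n u ∈ H := by
      intro u hu
      set T : TwoSidedIdeal (FreeAlgebra K (Fin n)) :=
        TwoSidedIdeal.mk' {u | t * emb K n u ∈ H}
          (by simpa using H.zero_mem)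
          (fun {a b} ha hb => by
            simp only [Set.mem_setOf_eq, map_add, mul_add] at *
            exact H.add_mem ha hb)
          (fun {a} ha => by
            simp only [Set.mem_setOf_eq, map_neg, mul_neg] at *
            exact H.neg_mem ha)
          (fun {a b} hb => by
            simp only [Set.mem_setOf_eq, map_mul] at *
            have key : t * (emb K n a * emb K n b) =
                (t * emb K n a - emb K n a * t) * emb K n b + emb K n a * (t * emb K n b) := by
              noncomm_ring
            rw [key]
            exact H.add_mem (H.mul_mem_right _ _ (hcomm a)) (H.mul_mem_left _ _ hb))
          (fun {a b} ha => by
            simp only [Set.mem_setOf_eq, map_mul, ← mul_assoc] at *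
            exact H.mul_mem_right _ _ ha) with hT
      have : u ∈ T := by
        refine TwoSidedIdeal.mem_span_iff.mp hu T ?_
        rintro - ⟨i, rfl⟩
        rw [hT, SetLike.mem_coe, TwoSidedIdeal.mem_mk']
        exact TwoSidedIdeal.subset_span (Set.mem_union_left _ (Set.mem_union_left _ ⟨i, rfl⟩))
      rwa [hT, TwoSidedIdeal.mem_mk'] at this
    -- (1 - t) * emb u ∈ H for all u ∈ span (range g)
    have hcomm' : ∀ u : FreeAlgebra K (Fin n),
        (1 - t) * emb K n u - emb K n u * (1 - t) ∈ H := by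
      intro u
      have key : (1 - t) * emb K n u - emb K n u * (1 - t) =
          -(t * emb K n u - emb K n u * t) := by noncomm_ring
      rw [key]
      exact H.neg_mem (hcomm u)
    have h2 : ∀ u ∈ TwoSidedIdeal.span (Set.range g), (1 - t) * emb K n u ∈ H := by
      intro u hu
      set T : TwoSidedIdeal (FreeAlgebra K (Fin n)) :=
        TwoSidedIdeal.mk' {u | (1 - t) * emb K n u ∈ H}
          (by simpa using H.zero_mem)
          (fun {a b} ha hb => by
            simp only [Set.mem_setOf_eq, map_add, mul_add] at *
            exact H.add_mem ha hb)
          (fun {a} ha => by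
            simp only [Set.mem_setOf_eq, map_neg, mul_neg] at *
            exact H.neg_mem ha)
          (fun {a b} hb => by
            simp only [Set.mem_setOf_eq, map_mul] at *
            have key : (1 - t) * (emb K n a * emb K n b) =
                ((1 - t) * emb K n a - emb K n a * (1 - t)) * emb K n b +
                  emb K n a * ((1 - t) * emb K n b) := by
              noncomm_ring
            rw [key]
            exact H.add_mem (H.mul_mem_right _ _ (hcomm' a)) (H.mul_mem_left _ _ hb))
          (fun {a b} ha => by
            simp only [Set.mem_setOf_eq, map_mul, ← mul_assoc] at *
            exact H.mul_mem_right _ _ ha) with hT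
      have : u ∈ T := by
        refine TwoSidedIdeal.mem_span_iff.mp hu T ?_
        rintro - ⟨j, rfl⟩
        rw [hT, SetLike.mem_coe, TwoSidedIdeal.mem_mk']
        exact TwoSidedIdeal.subset_span
          (Set.mem_union_left _ (Set.mem_union_right _ ⟨j, rfl⟩))
      rwa [hT, TwoSidedIdeal.mem_mk'] at this
    have key : emb K n h = t * emb K n h + (1 - t) * emb K n h := by noncomm_ring
    rw [key]
    exact H.add_mem (h1 h hI) (h2 h hJ)
  · intro hιh
    constructor
    · -- evaluate t at 1
      have hle : emb K n h ∈ (TwoSidedIdeal.span (Set.range f)).comap (retr K n 1).toRingHom := by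
        refine TwoSidedIdeal.mem_span_iff.mp hιh _ ?_
        rintro x hx
        rw [SetLike.mem_coe, TwoSidedIdeal.mem_comap]
        rcases hx with (⟨i, rfl⟩ | ⟨j, rfl⟩) | ⟨k, rfl⟩
        · simpa [ht] using TwoSidedIdeal.subset_span (Set.mem_range_self i)
        · simpa [ht] using (TwoSidedIdeal.span (Set.range f)).zero_mem
        · simpa [ht] using (TwoSidedIdeal.span (Set.range f)).zero_mem
      rw [TwoSidedIdeal.mem_comap] at hle
      simpa using hle
    · -- evaluate t at 0
      have hle : emb K n h ∈ (TwoSidedIdeal.span (Set.range g)).comap (retr K n 0).toRingHom := by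
        refine TwoSidedIdeal.mem_span_iff.mp hιh _ ?_
        rintro x hx
        rw [SetLike.mem_coe, TwoSidedIdeal.mem_comap]
        rcases hx with (⟨i, rfl⟩ | ⟨j, rfl⟩) | ⟨k, rfl⟩
        · simpa [ht] using (TwoSidedIdeal.span (Set.range g)).zero_mem
        · simpa [ht] using TwoSidedIdeal.subset_span (Set.mem_range_self j)
        · simpa [ht] using (TwoSidedIdeal.span (Set.range g)).zero_mem
      rw [TwoSidedIdeal.mem_comap] at hle
      simpa using hle
end

section
/- Let K be a field, X = {x₁,…,xₙ}, and let I = (f₁,…,f_r) be a two-sided ideal of K⟨X⟩ and A ∈ ℤ^{n×k} a matrix with rows a₁,…,aₙ. Let I^{φ̄_A} be the two-sided ideal of the quotient algebra 𝒜 = K⟨X,T,T⁻¹⟩/J generated by φ̄_A(f₁),…,φ̄_A(f_r). Then hom_A(I) = { f ∈ K⟨X⟩ : π(ι(f)) ∈ I^{φ̄_A} }, i.e., the homogeneous part of I with respect to deg_A consists exactly of those polynomials in K⟨X⟩ whose residue class modulo J lies in the extension ideal I^{φ̄_A}. -/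
open scoped BigOperators

/-- The alphabet `X ∪ T ∪ T⁻¹`: `n` letters `xᵢ`, `k` letters `t_j` and `k` letters `t_j⁻¹`. -/
abbrev XTT (n k : ℕ) := Fin n ⊕ (Fin k ⊕ Fin k)

/-- The relations generating the ideal `J ⊆ K⟨X,T,T⁻¹⟩`: every letter of `T ∪ T⁻¹` commutes
with every letter of `X ∪ T ∪ T⁻¹`, and `t_j · t_j⁻¹ = 1`.  The quotient algebra
`𝒜 = K⟨X,T,T⁻¹⟩/J` is `RingQuot (Jrel K n k)` and the quotient map `π` is
`RingQuot.mkAlgHom K (Jrel K n k)`. -/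
inductive Jrel (K : Type*) [Field K] (n k : ℕ) :
    FreeAlgebra K (XTT n k) → FreeAlgebra K (XTT n k) → Prop
  | comm (u : XTT n k) (v : Fin k ⊕ Fin k) :
      Jrel K n k (FreeAlgebra.ι K u * FreeAlgebra.ι K (Sum.inr v))
        (FreeAlgebra.ι K (Sum.inr v) * FreeAlgebra.ι K u)
  | inv (j : Fin k) :
      Jrel K n k
        (FreeAlgebra.ι K (Sum.inr (Sum.inl j)) * FreeAlgebra.ι K (Sum.inr (Sum.inr j))) 1

/-- `τ(α) = s₁^{|α₁|} ⋯ s_k^{|α_k|}` where `s_j = t_j` if `α_j ≥ 0` and `s_j = t_j⁻¹`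
otherwise. -/
noncomputable def tau (K : Type*) [Field K] (n k : ℕ) (α : Fin k → ℤ) :
    FreeAlgebra K (XTT n k) :=
  (List.ofFn fun j : Fin k =>
    (if 0 ≤ α j then FreeAlgebra.ι K (Sum.inr (Sum.inl j) : XTT n k)
      else FreeAlgebra.ι K (Sum.inr (Sum.inr j) : XTT n k)) ^ (α j).natAbs).prod

/-- The monoid homomorphism `deg_A : ⟨X⟩ → ℤ^k` determined by the rows `a i` of the matrix
`A ∈ ℤ^{n×k}`: the degree of a word is the sum of the degrees of its letters. -/
def degA {n k : ℕ} (a : Fin n → Fin k → ℤ) (m : FreeMonoid (Fin n)) : Fin k → ℤ :=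
  ((FreeMonoid.toList m).map a).sum

/-- `f ∈ K⟨X⟩` is homogeneous w.r.t. `deg_A` if all monomials in its support (computed via the
identification of `K⟨X⟩` with the monoid algebra of the free monoid `⟨X⟩`) have the same
`deg_A`-value. -/
def Homog (K : Type*) [Field K] {n k : ℕ} (a : Fin n → Fin k → ℤ)
    (f : FreeAlgebra K (Fin n)) : Prop :=
  ∃ α : Fin k → ℤ,
    ∀ m ∈ (FreeAlgebra.equivMonoidAlgebraFreeMonoid (R := K) f).coeff.support, degA a m = α

/-- The canonical embedding `ι : K⟨X⟩ → K⟨X,T,T⁻¹⟩`, `xᵢ ↦ xᵢ`. -/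
noncomputable def embA (K : Type*) [Field K] (n k : ℕ) :
    FreeAlgebra K (Fin n) →ₐ[K] FreeAlgebra K (XTT n k) :=
  FreeAlgebra.lift K fun i => FreeAlgebra.ι K (Sum.inl i)

/-- The algebra homomorphism `φ_A : K⟨X⟩ → K⟨X,T,T⁻¹⟩`, `xᵢ ↦ xᵢ · τ(aᵢ)`. -/
noncomputable def phiA (K : Type*) [Field K] (n k : ℕ) (a : Fin n → Fin k → ℤ) :
    FreeAlgebra K (Fin n) →ₐ[K] FreeAlgebra K (XTT n k) :=
  FreeAlgebra.lift K fun i => FreeAlgebra.ι K (Sum.inl i) * tau K n k (a i)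




namespace Hom2025X
variable {A : Type*} [Semiring A] {S : Set A}

theorem zero_mem_idealSpan : (0 : A) ∈ idealSpan S :=
  ⟨0, Fin.elim0, Fin.elim0, Fin.elim0, fun i => i.elim0, by simp⟩

theorem mul_mem_idealSpan {s : A} (hs : s ∈ S) (p q : A) : p * s * q ∈ idealSpan S :=
  ⟨1, fun _ => p, fun _ => s, fun _ => q, fun _ => hs, by simp⟩

theorem mem_idealSpan {s : A} (hs : s ∈ S) : s ∈ idealSpan S := by
  simpa using mul_mem_idealSpan hs 1 1

theorem add_mem_idealSpan {x y : A} (hx : x ∈ idealSpan S) (hy : y ∈ idealSpan S) :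
    x + y ∈ idealSpan S := by
  obtain ⟨d₁, p₁, f₁, q₁, hf₁, rfl⟩ := hx
  obtain ⟨d₂, p₂, f₂, q₂, hf₂, rfl⟩ := hy
  refine ⟨d₁ + d₂, Fin.append p₁ p₂, Fin.append f₁ f₂, Fin.append q₁ q₂, ?_, ?_⟩
  · intro i
    refine Fin.addCases (fun i => ?_) (fun i => ?_) i <;> simp [hf₁, hf₂]
  · rw [Fin.sum_univ_add]
    simp

theorem idealSpan_induction {x : A} (hx : x ∈ idealSpan S) {P : A → Prop}
    (zero : P 0) (add : ∀ u v, P u → P v → P (u + v))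
    (elem : ∀ s ∈ S, ∀ p q, P (p * s * q)) : P x := by
  obtain ⟨d, p, f, q, hf, rfl⟩ := hx
  exact Finset.sum_induction _ P add zero fun i _ => elem _ (hf i) _ _

theorem sum_mem_idealSpan {ι : Type*} {t : Finset ι} {g : ι → A}
    (h : ∀ i ∈ t, g i ∈ idealSpan S) : ∑ i ∈ t, g i ∈ idealSpan S :=
  Finset.sum_induction _ _ (fun _ _ => add_mem_idealSpan) zero_mem_idealSpan h

theorem mul_left_mem_idealSpan {x : A} (hx : x ∈ idealSpan S) (c : A) :
    c * x ∈ idealSpan S := by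
  refine idealSpan_induction (P := fun y => c * y ∈ idealSpan S) hx
    (by simpa using (zero_mem_idealSpan (S := S))) ?_ ?_
  · intro u v hu hv
    rw [mul_add]; exact add_mem_idealSpan hu hv
  · intro s hs p q
    rw [← mul_assoc, ← mul_assoc]
    exact mul_mem_idealSpan hs _ _

theorem mul_right_mem_idealSpan {x : A} (hx : x ∈ idealSpan S) (c : A) :
    x * c ∈ idealSpan S := by
  refine idealSpan_induction (P := fun y => y * c ∈ idealSpan S) hx
    (by simpa using (zero_mem_idealSpan (S := S))) ?_ ?_
  · intro u v hu hv
    rw [add_mul]; exact add_mem_idealSpan hu hv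
  · intro s hs p q
    rw [mul_assoc]
    exact mul_mem_idealSpan hs p (q * c)

theorem map_mem_idealSpan {B : Type*} [Semiring B] {F : Type*} [FunLike F A B]
    [RingHomClass F A B] {r : ℕ} {z : Fin r → A}
    (φ : F) {x : A} (hx : x ∈ idealSpan (Set.range z)) :
    φ x ∈ idealSpan (Set.range fun i => φ (z i)) := by
  obtain ⟨d, p, f, q, hf, rfl⟩ := hx
  refine ⟨d, fun i => φ (p i), fun i => φ (f i), fun i => φ (q i), ?_, by simp⟩
  intro i
  obtain ⟨j, hj⟩ := hf i
  exact ⟨j, by simp only []; rw [hj]⟩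

end Hom2025X


noncomputable section
namespace Hom2025X
open AddMonoidAlgebra


variable (K : Type*) [Field K] (n k : ℕ) (a : Fin n → Fin k → ℤ)


abbrev Bb := AddMonoidAlgebra (FreeAlgebra K (Fin n)) (Fin k → ℤ)

def Phi : FreeAlgebra K (Fin n) →ₐ[K] Bb K n k :=
  FreeAlgebra.lift K fun i => AddMonoidAlgebra.single (a i) (FreeAlgebra.ι K i)

def Mo (m : FreeMonoid (Fin n)) : FreeAlgebra K (Fin n) :=
  FreeMonoid.lift (FreeAlgebra.ι K) m

abbrev E := (FreeAlgebra.equivMonoidAlgebraFreeMonoid (R := K) (X := Fin n))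

theorem E_Mo (m : FreeMonoid (Fin n)) : E K n (Mo K n m) = MonoidAlgebra.single m 1 := by
  induction m using FreeMonoid.inductionOn with
  | one => simp [Mo, MonoidAlgebra.one_def]
  | of i =>
      simp [Mo, E, FreeAlgebra.equivMonoidAlgebraFreeMonoid, MonoidAlgebra.of_apply]
  | mul x y hx hy =>
      rw [Mo, map_mul, map_mul, ← Mo, ← Mo, hx, hy, MonoidAlgebra.single_mul_single, one_mul]

theorem decomp (g : FreeAlgebra K (Fin n)) :
    g = (E K n g).coeff.sum fun m c => c • Mo K n m := by
  apply (E K n).injective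
  rw [map_finsuppSum]
  conv_lhs => rw [← MonoidAlgebra.sum_coeff_single (E K n g)]
  refine Finsupp.sum_congr fun m hm => ?_
  rw [map_smul, E_Mo, MonoidAlgebra.smul_single, smul_eq_mul, mul_one]

theorem degA_one : degA a (1 : FreeMonoid (Fin n)) = 0 := rfl

theorem degA_of_mul (i : Fin n) (m : FreeMonoid (Fin n)) :
    degA a (FreeMonoid.of i * m) = a i + degA a m := rfl

theorem Phi_Mo (m : FreeMonoid (Fin n)) :
    Phi K n k a (Mo K n m) = AddMonoidAlgebra.single (degA a m) (Mo K n m) := by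
  induction m using FreeMonoid.inductionOn' with
  | one => simp [Mo, degA_one, AddMonoidAlgebra.one_def]
  | of_mul i m ih =>
      have hmo : Mo K n (FreeMonoid.of i * m) = FreeAlgebra.ι K i * Mo K n m := by
        simp [Mo]
      rw [hmo, map_mul, ih, Phi, FreeAlgebra.lift_ι_apply,
        AddMonoidAlgebra.single_mul_single, degA_of_mul, ← hmo]

theorem Phi_homog {g : FreeAlgebra K (Fin n)} {α : Fin k → ℤ}
    (h : ∀ m ∈ (E K n g).coeff.support, degA a m = α) :
    Phi K n k a g = AddMonoidAlgebra.single α g := by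
  conv_lhs => rw [decomp K n g]
  conv_rhs => rw [decomp K n g]
  rw [map_finsuppSum, Finsupp.sum, Finsupp.sum]
  rw [show (AddMonoidAlgebra.single α ((∑ m ∈ (E K n g).coeff.support, (E K n g).coeff m • Mo K n m)) : Bb K n k)
      = ∑ m ∈ (E K n g).coeff.support, AddMonoidAlgebra.single α ((E K n g).coeff m • Mo K n m) from
    map_sum (AddMonoidAlgebra.singleAddHom α) _ _]
  refine Finset.sum_congr rfl fun m hm => ?_
  rw [map_smul, Phi_Mo, h m hm, AddMonoidAlgebra.smul_single]


theorem single_central_comm {R G : Type*} [Semiring R] [AddCommMonoid G]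
    (g : G) (c : R) (hc : ∀ r, Commute c r) (x : AddMonoidAlgebra R G) :
    Commute (AddMonoidAlgebra.single g c) x := by
  induction x using AddMonoidAlgebra.induction_linear with
  | zero => exact Commute.zero_right _
  | add f h hf hh => exact hf.add_right hh
  | single h b =>
      show _ * _ = _ * _
      rw [AddMonoidAlgebra.single_mul_single, AddMonoidAlgebra.single_mul_single, add_comm, hc b]

theorem single_one_comm {R G : Type*} [Semiring R] [AddCommMonoid G]
    (g : G) (x : AddMonoidAlgebra R G) :
    Commute (AddMonoidAlgebra.single g (1 : R)) x :=
  single_central_comm g 1 (fun r => Commute.one_left r) x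


def epsHom : AddMonoidAlgebra (FreeAlgebra K (Fin n)) (Fin k → ℤ) →ₐ[K] FreeAlgebra K (Fin n) :=
  AddMonoidAlgebra.liftNCAlgHom (AlgHom.id K _) 1 (fun x _ => by
    simpa using Commute.one_right x)

theorem eps_single (α : Fin k → ℤ) (h : FreeAlgebra K (Fin n)) :
    epsHom K n k (AddMonoidAlgebra.single α h) = h := by
  simp [epsHom, AddMonoidAlgebra.liftNCAlgHom, AddMonoidAlgebra.liftNCRingHom]



abbrev Bb' := AddMonoidAlgebra (AddMonoidAlgebra (FreeAlgebra K (Fin n)) (Fin k → ℤ)) (Fin k → ℤ)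

def fTheta : FreeAlgebra K (Fin n) →ₐ[K] Bb' K n k :=
  FreeAlgebra.lift K fun i =>
    AddMonoidAlgebra.single (a i) (AddMonoidAlgebra.single 0 (FreeAlgebra.ι K i))

def gTheta : Multiplicative (Fin k → ℤ) →* Bb' K n k where
  toFun α := AddMonoidAlgebra.single (-(Multiplicative.toAdd α))
    (AddMonoidAlgebra.single (Multiplicative.toAdd α) 1)
  map_one' := by
    show AddMonoidAlgebra.single (-Multiplicative.toAdd (1 : Multiplicative (Fin k → ℤ)))
      (AddMonoidAlgebra.single (Multiplicative.toAdd (1 : Multiplicative (Fin k → ℤ))) 1) = 1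
    rw [toAdd_one, neg_zero, ← AddMonoidAlgebra.one_def, ← AddMonoidAlgebra.one_def]
  map_mul' α β := by
    show AddMonoidAlgebra.single (-Multiplicative.toAdd (α * β))
      (AddMonoidAlgebra.single (Multiplicative.toAdd (α * β)) 1) = _
    rw [AddMonoidAlgebra.single_mul_single, AddMonoidAlgebra.single_mul_single, one_mul,
      toAdd_mul, neg_add]

theorem gTheta_comm (y : Multiplicative (Fin k → ℤ)) (x : Bb' K n k) :
    Commute (gTheta K n k y) x :=
  single_central_comm _ _ (fun r => single_one_comm _ r) x

def Theta : AddMonoidAlgebra (FreeAlgebra K (Fin n)) (Fin k → ℤ) →ₐ[K] Bb' K n k :=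
  AddMonoidAlgebra.liftNCAlgHom (fTheta K n k a) (gTheta K n k)
    (fun x y => (gTheta_comm K n k y _).symm)

theorem Theta_single (α : Fin k → ℤ) (h : FreeAlgebra K (Fin n)) :
    Theta K n k a (AddMonoidAlgebra.single α h) =
      fTheta K n k a h * gTheta K n k (Multiplicative.ofAdd α) := by
  simp [Theta, AddMonoidAlgebra.liftNCAlgHom, AddMonoidAlgebra.liftNCRingHom]

theorem Theta_single_zero (h : FreeAlgebra K (Fin n)) :
    Theta K n k a (AddMonoidAlgebra.single 0 h) = fTheta K n k a h := by
  rw [Theta_single, show Multiplicative.ofAdd (0 : Fin k → ℤ) = 1 from rfl, map_one, mul_one]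


theorem eps_Phi (g : FreeAlgebra K (Fin n)) : epsHom K n k (Phi K n k a g) = g := by
  have h : (epsHom K n k).comp (Phi K n k a) = AlgHom.id K _ := by
    apply FreeAlgebra.hom_ext
    funext i
    show epsHom K n k (Phi K n k a (FreeAlgebra.ι K i)) = _
    rw [Phi, FreeAlgebra.lift_ι_apply, eps_single]
    rfl
  have := DFunLike.congr_fun h g
  simpa using this

theorem fTheta_Mo (m : FreeMonoid (Fin n)) :
    fTheta K n k a (Mo K n m) =
      AddMonoidAlgebra.single (degA a m) (AddMonoidAlgebra.single 0 (Mo K n m)) := by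
  induction m using FreeMonoid.inductionOn' with
  | one =>
      rw [Mo, map_one, map_one, degA_one, ← AddMonoidAlgebra.one_def, ← AddMonoidAlgebra.one_def]
  | of_mul i m ih =>
      have hmo : Mo K n (FreeMonoid.of i * m) = FreeAlgebra.ι K i * Mo K n m := by simp [Mo]
      rw [hmo, map_mul, ih, fTheta, FreeAlgebra.lift_ι_apply, AddMonoidAlgebra.single_mul_single,
        AddMonoidAlgebra.single_mul_single, ← hmo]
      simp [degA_of_mul, hmo]

theorem Theta_Phi (g : FreeAlgebra K (Fin n)) :
    Theta K n k a (Phi K n k a g) = AddMonoidAlgebra.single 0 (Phi K n k a g) := by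
  induction g using FreeAlgebra.induction with
  | grade0 c =>
      rw [AlgHom.commutes, AlgHom.commutes]
      rfl
  | grade1 i =>
      have hg : gTheta K n k (Multiplicative.ofAdd (a i)) =
          AddMonoidAlgebra.single (-(a i)) (AddMonoidAlgebra.single (a i) 1) := rfl
      rw [Phi, FreeAlgebra.lift_ι_apply, Theta_single, fTheta, FreeAlgebra.lift_ι_apply, hg,
        AddMonoidAlgebra.single_mul_single, AddMonoidAlgebra.single_mul_single]
      simp
  | mul u v hu hv =>
      rw [map_mul, map_mul, hu, hv, AddMonoidAlgebra.single_mul_single, zero_add]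
  | add u v hu hv =>
      rw [map_add, map_add, hu, hv]
      exact (AddMonoidAlgebra.single_add 0 _ _).symm

theorem mul_apply_right {S : Type*} [Semiring S] {G : Type*} [AddCommGroup G]
    (p w : AddMonoidAlgebra S G) (β : G) :
    (p * w).coeff β = p.coeff.sum fun γ c => c * w.coeff (β - γ) := by
  classical
  rw [AddMonoidAlgebra.coeff_mul]
  refine Finsupp.sum_congr fun γ _ => ?_
  have h1 : (fun (δ : G) (d : S) => if γ + δ = β then p.coeff γ * d else 0) =
      fun δ d => if δ = β - γ then p.coeff γ * d else 0 := by
    funext δ d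
    congr 1
    simp [eq_sub_iff_add_eq, add_comm, eq_comm]
  rw [h1, Finsupp.sum_ite_eq' w.coeff (β - γ) fun _ d => p.coeff γ * d]
  by_cases hmem : β - γ ∈ w.coeff.support
  · rw [if_pos hmem]
  · rw [if_neg hmem, Finsupp.notMem_support_iff.mp hmem, mul_zero]

theorem coeff_mem_idealSpan {r : ℕ}
    (z : Fin r → AddMonoidAlgebra (FreeAlgebra K (Fin n)) (Fin k → ℤ))
    {w : Bb' K n k}
    (hw : w ∈ idealSpan (Set.range fun i =>
      (AddMonoidAlgebra.single (0 : Fin k → ℤ) (z i) : Bb' K n k)))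
    (β : Fin k → ℤ) : w.coeff β ∈ idealSpan (Set.range z) := by
  refine idealSpan_induction
    (P := fun w => ∀ β, w.coeff β ∈ idealSpan (Set.range z)) hw ?_ ?_ ?_ β
  · intro β; simp only [AddMonoidAlgebra.coeff_zero, Finsupp.coe_zero, Pi.zero_apply]; exact zero_mem_idealSpan
  · intro u v hu hv β
    rw [AddMonoidAlgebra.coeff_add, Finsupp.add_apply]
    exact add_mem_idealSpan (hu β) (hv β)
  · rintro s ⟨i, hi⟩ p q β
    rw [show s = (AddMonoidAlgebra.single (0 : Fin k → ℤ) (z i) : Bb' K n k) from hi.symm]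
    rw [mul_assoc, mul_apply_right]
    refine sum_mem_idealSpan fun γ _ => ?_
    show p.coeff γ * ((AddMonoidAlgebra.single (0 : Fin k → ℤ) (z i) : Bb' K n k) * q).coeff (β - γ) ∈
      idealSpan (Set.range z)
    rw [AddMonoidAlgebra.coeff_single_zero_mul, ← mul_assoc]
    exact mul_mem_idealSpan (Set.mem_range_self i) _ _

open scoped Classical in
def Pb (β : Fin k → ℤ) (g : FreeAlgebra K (Fin n)) : FreeAlgebra K (Fin n) :=
  (E K n).symm (MonoidAlgebra.ofCoeff (Finsupp.filter (fun m => degA a m = β) (E K n g).coeff))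

open scoped Classical in
theorem Pb_eq_sum (β : Fin k → ℤ) (g : FreeAlgebra K (Fin n)) :
    Pb K n k a β g = ∑ m ∈ (E K n g).coeff.support,
      if degA a m = β then (E K n g).coeff m • Mo K n m else 0 := by
  apply (E K n).injective
  rw [Pb, AlgEquiv.apply_symm_apply, map_sum]
  ext m'
  rw [MonoidAlgebra.coeff_ofCoeff, Finsupp.filter_apply, MonoidAlgebra.coeff_sum, Finset.sum_apply']
  have h1 : ∀ m ∈ (E K n g).coeff.support,
      ((E K n) (if degA a m = β then (E K n g).coeff m • Mo K n m else 0)).coeff m' =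
      if m = m' then (if degA a m = β then (E K n g).coeff m else 0) else 0 := by
    intro m _
    rw [apply_ite (E K n), map_smul, E_Mo, map_zero]
    by_cases h' : m = m'
    · subst h'
      split_ifs <;> simp_all [MonoidAlgebra.single_apply]
    · split_ifs <;> simp_all [MonoidAlgebra.single_apply, h']
  rw [Finset.sum_congr rfl h1, Finset.sum_ite_eq' (E K n g).coeff.support m'
    fun m => if degA a m = β then (E K n g).coeff m else 0]
  by_cases hm : m' ∈ (E K n g).coeff.support
  · rw [if_pos hm]
  · rw [if_neg hm, Finsupp.notMem_support_iff.mp hm]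
    simp

open scoped Classical in
theorem Theta_eval (g : FreeAlgebra K (Fin n)) (β : Fin k → ℤ) :
    (Theta K n k a (AddMonoidAlgebra.single 0 g)).coeff β =
      AddMonoidAlgebra.single 0 (Pb K n k a β g) := by
  rw [Theta_single_zero]
  conv_lhs => rw [decomp K n g]
  rw [map_finsuppSum, Finsupp.sum, AddMonoidAlgebra.coeff_sum, Finset.sum_apply', Pb_eq_sum,
    show (AddMonoidAlgebra.single (0 : Fin k → ℤ)
        (∑ m ∈ (E K n g).coeff.support, if degA a m = β then (E K n g).coeff m • Mo K n m else 0)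
        : AddMonoidAlgebra (FreeAlgebra K (Fin n)) (Fin k → ℤ))
      = ∑ m ∈ (E K n g).coeff.support, AddMonoidAlgebra.single (0 : Fin k → ℤ)
          (if degA a m = β then (E K n g).coeff m • Mo K n m else 0) from
      map_sum (AddMonoidAlgebra.singleAddHom 0) _ _]
  refine Finset.sum_congr rfl fun m _ => ?_
  rw [map_smul, fTheta_Mo, AddMonoidAlgebra.coeff_smul, Finsupp.smul_apply,
    AddMonoidAlgebra.coeff_single, Finsupp.single_apply]
  split_ifs
  · exact AddMonoidAlgebra.smul_single _ _ _
  · rw [smul_zero]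
    exact (AddMonoidAlgebra.single_zero 0).symm


open scoped Classical in
theorem Pb_homog (β : Fin k → ℤ) (g : FreeAlgebra K (Fin n)) :
    ∀ m ∈ (E K n (Pb K n k a β g)).coeff.support, degA a m = β := by
  intro m hm
  rw [Pb, AlgEquiv.apply_symm_apply, MonoidAlgebra.coeff_ofCoeff, Finsupp.support_filter, Finset.mem_filter] at hm
  exact hm.2

open scoped Classical in
theorem sum_Pb (g : FreeAlgebra K (Fin n)) :
    g = ∑ β ∈ (E K n g).coeff.support.image (degA a), Pb K n k a β g := by
  apply (E K n).injective
  rw [map_sum]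
  ext m
  rw [MonoidAlgebra.coeff_sum, Finset.sum_apply']
  have h1 : ∀ β ∈ (E K n g).coeff.support.image (degA a),
      ((E K n) (Pb K n k a β g)).coeff m = if degA a m = β then (E K n g).coeff m else 0 := by
    intro β _
    rw [Pb, AlgEquiv.apply_symm_apply, MonoidAlgebra.coeff_ofCoeff, Finsupp.filter_apply]
  rw [Finset.sum_congr rfl h1, Finset.sum_ite_eq ((E K n g).coeff.support.image (degA a)) (degA a m)
    fun _ => (E K n g).coeff m]
  by_cases hm : degA a m ∈ (E K n g).coeff.support.image (degA a)
  · rw [if_pos hm]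
  · rw [if_neg hm]
    by_contra hne
    exact hm (Finset.mem_image.mpr ⟨m, Finsupp.mem_support_iff.mpr fun h0 => hne (h0 ▸ rfl), rfl⟩)

theorem B_sub {r : ℕ} (f : Fin r → FreeAlgebra K (Fin n)) {g : FreeAlgebra K (Fin n)}
    (hg : g ∈ idealSpan {h | h ∈ idealSpan (Set.range f) ∧ Homog K a h}) :
    AddMonoidAlgebra.single (0 : Fin k → ℤ) g ∈
      idealSpan (Set.range fun i => Phi K n k a (f i)) := by
  refine idealSpan_induction (P := fun g => AddMonoidAlgebra.single (0 : Fin k → ℤ) g ∈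
    idealSpan (Set.range fun i => Phi K n k a (f i))) hg ?_ ?_ ?_
  · show AddMonoidAlgebra.single (0 : Fin k → ℤ) (0 : FreeAlgebra K (Fin n)) ∈ _
    rw [AddMonoidAlgebra.single_zero]; exact zero_mem_idealSpan
  · intro u v hu hv; rw [AddMonoidAlgebra.single_add]; exact add_mem_idealSpan hu hv
  · rintro s ⟨hsI, α, hα⟩ p q
    have h1 : AddMonoidAlgebra.single (0 : Fin k → ℤ) (p * s * q) =
        AddMonoidAlgebra.single (0 : Fin k → ℤ) p * AddMonoidAlgebra.single (0 : Fin k → ℤ) s *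
          AddMonoidAlgebra.single (0 : Fin k → ℤ) q := by
      rw [AddMonoidAlgebra.single_mul_single, AddMonoidAlgebra.single_mul_single]
      simp
    rw [h1]
    refine mul_right_mem_idealSpan (mul_left_mem_idealSpan ?_ _) _
    have h2 : Phi K n k a s = AddMonoidAlgebra.single α s := Phi_homog K n k a hα
    have h3 : AddMonoidAlgebra.single (0 : Fin k → ℤ) s =
        Phi K n k a s * AddMonoidAlgebra.single (-α) 1 := by
      rw [h2, AddMonoidAlgebra.single_mul_single, mul_one]
      simp
    rw [h3]
    exact mul_right_mem_idealSpan (map_mem_idealSpan (Phi K n k a) hsI) _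

theorem B_sup {r : ℕ} (f : Fin r → FreeAlgebra K (Fin n)) {g : FreeAlgebra K (Fin n)}
    (hg : AddMonoidAlgebra.single (0 : Fin k → ℤ) g ∈
      idealSpan (Set.range fun i => Phi K n k a (f i))) :
    g ∈ idealSpan {h | h ∈ idealSpan (Set.range f) ∧ Homog K a h} := by
  have hθ := map_mem_idealSpan (Theta K n k a) hg
  have heq : (fun i => Theta K n k a (Phi K n k a (f i))) =
      fun i => AddMonoidAlgebra.single (0 : Fin k → ℤ) (Phi K n k a (f i)) := by
    funext i; exact Theta_Phi K n k a (f i)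
  rw [heq] at hθ
  have hPb : ∀ β, Pb K n k a β g ∈ idealSpan (Set.range f) := by
    intro β
    have h1 := coeff_mem_idealSpan K n k (fun i => Phi K n k a (f i)) hθ β
    rw [Theta_eval] at h1
    have h2 := map_mem_idealSpan (epsHom K n k) h1
    rw [eps_single] at h2
    have h3 : (fun i => epsHom K n k (Phi K n k a (f i))) = f := by
      funext i; exact eps_Phi K n k a (f i)
    rwa [h3] at h2
  rw [sum_Pb K n k a g]
  exact sum_mem_idealSpan fun β _ =>
    mem_idealSpan ⟨hPb β, ⟨β, Pb_homog K n k a β g⟩⟩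

theorem central (v : Fin k ⊕ Fin k) (z : RingQuot (Jrel K n k)) :
    Commute (RingQuot.mkAlgHom K (Jrel K n k) (FreeAlgebra.ι K (Sum.inr v))) z := by
  obtain ⟨y, rfl⟩ := RingQuot.mkAlgHom_surjective K (Jrel K n k) z
  induction y using FreeAlgebra.induction with
  | grade0 c =>
      rw [AlgHom.commutes]
      exact (Algebra.commutes c _).symm
  | grade1 u =>
      have h := RingQuot.mkAlgHom_rel K (Jrel.comm (K := K) (n := n) (k := k) u v)
      rw [map_mul, map_mul] at h
      exact (Commute.symm h)
  | mul u w hu hw =>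
      rw [map_mul]
      exact Commute.mul_right hu hw
  | add u w hu hw =>
      rw [map_add]
      exact Commute.add_right hu hw

theorem TT' (j : Fin k) :
    RingQuot.mkAlgHom K (Jrel K n k) (FreeAlgebra.ι K (Sum.inr (Sum.inl j))) *
      RingQuot.mkAlgHom K (Jrel K n k) (FreeAlgebra.ι K (Sum.inr (Sum.inr j))) = 1 := by
  have h := RingQuot.mkAlgHom_rel K (@Jrel.inv K _ n k j)
  rw [map_mul, map_one] at h
  exact h

theorem T'T (j : Fin k) :
    RingQuot.mkAlgHom K (Jrel K n k) (FreeAlgebra.ι K (Sum.inr (Sum.inr j))) *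
      RingQuot.mkAlgHom K (Jrel K n k) (FreeAlgebra.ι K (Sum.inr (Sum.inl j))) = 1 := by
  rw [(central K n k (Sum.inr j) (RingQuot.mkAlgHom K (Jrel K n k)
    (FreeAlgebra.ι K (Sum.inr (Sum.inl j))))).eq]
  exact TT' K n k j

def Tc (j : Fin k) : Subring.center (RingQuot (Jrel K n k)) :=
  ⟨RingQuot.mkAlgHom K (Jrel K n k) (FreeAlgebra.ι K (Sum.inr (Sum.inl j))),
    Subring.mem_center_iff.mpr fun b => (central K n k (Sum.inl j) b).symm⟩

def Tc' (j : Fin k) : Subring.center (RingQuot (Jrel K n k)) :=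
  ⟨RingQuot.mkAlgHom K (Jrel K n k) (FreeAlgebra.ι K (Sum.inr (Sum.inr j))),
    Subring.mem_center_iff.mpr fun b => (central K n k (Sum.inr j) b).symm⟩

def uC (j : Fin k) : (Subring.center (RingQuot (Jrel K n k)))ˣ :=
  ⟨Tc K n k j, Tc' K n k j, Subtype.ext (TT' K n k j), Subtype.ext (T'T K n k j)⟩

def gU : Multiplicative (Fin k → ℤ) →* (Subring.center (RingQuot (Jrel K n k)))ˣ where
  toFun α := ∏ j, uC K n k j ^ (Multiplicative.toAdd α j)
  map_one' := by simp
  map_mul' α β := by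
    show (∏ j, uC K n k j ^ (Multiplicative.toAdd (α * β) j)) =
      (∏ j, uC K n k j ^ (Multiplicative.toAdd α j)) *
        ∏ j, uC K n k j ^ (Multiplicative.toAdd β j)
    rw [← Finset.prod_mul_distrib]
    refine Finset.prod_congr rfl fun j _ => ?_
    rw [toAdd_mul, Pi.add_apply, zpow_add]

def c2 : (Subring.center (RingQuot (Jrel K n k)))ˣ →* RingQuot (Jrel K n k) :=
  ((Subring.center (RingQuot (Jrel K n k))).subtype.toMonoidHom).comp
    (Units.coeHom (Subring.center (RingQuot (Jrel K n k))))

def gchi : Multiplicative (Fin k → ℤ) →* RingQuot (Jrel K n k) :=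
  (c2 K n k).comp (gU K n k)

theorem gchi_central (y : Multiplicative (Fin k → ℤ)) (x : RingQuot (Jrel K n k)) :
    x * gchi K n k y = gchi K n k y * x :=
  Subring.mem_center_iff.mp ((gU K n k y : Subring.center (RingQuot (Jrel K n k))).prop) x

theorem pi_tau (α : Fin k → ℤ) :
    RingQuot.mkAlgHom K (Jrel K n k) (tau K n k α) = gchi K n k (Multiplicative.ofAdd α) := by
  rw [tau, map_list_prod (RingQuot.mkAlgHom K (Jrel K n k)), List.map_ofFn]
  have hfac : ∀ j : Fin k,
      (RingQuot.mkAlgHom K (Jrel K n k) ∘ fun j : Fin k =>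
        (if 0 ≤ α j then FreeAlgebra.ι K (Sum.inr (Sum.inl j) : XTT n k)
          else FreeAlgebra.ι K (Sum.inr (Sum.inr j) : XTT n k)) ^ (α j).natAbs) j =
      c2 K n k (uC K n k j ^ (α j)) := by
    intro j
    simp only [Function.comp_apply, map_pow, apply_ite (RingQuot.mkAlgHom K (Jrel K n k))]
    by_cases h : 0 ≤ α j
    · rw [if_pos h]
      have h1 : α j = ((α j).natAbs : ℤ) := by omega
      conv_rhs => rw [h1]
      rw [zpow_natCast, map_pow]
      rfl
    · rw [if_neg h]
      have h1 : α j = -(((α j).natAbs : ℤ)) := by omega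
      conv_rhs => rw [h1]
      rw [zpow_neg, zpow_natCast, ← inv_pow, map_pow]
      rfl
  rw [show (List.ofFn (RingQuot.mkAlgHom K (Jrel K n k) ∘ fun j : Fin k =>
      (if 0 ≤ α j then FreeAlgebra.ι K (Sum.inr (Sum.inl j) : XTT n k)
        else FreeAlgebra.ι K (Sum.inr (Sum.inr j) : XTT n k)) ^ (α j).natAbs)) =
    List.ofFn fun j => c2 K n k (uC K n k j ^ (α j)) from congrArg List.ofFn (funext hfac)]
  rw [show (List.ofFn fun j => c2 K n k (uC K n k j ^ (α j))) =
      (List.ofFn fun j => uC K n k j ^ (α j)).map (c2 K n k) from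
    (List.map_ofFn (g := c2 K n k)).symm]
  rw [← map_list_prod (c2 K n k), List.prod_ofFn]
  rfl

def fchi : FreeAlgebra K (Fin n) →ₐ[K] RingQuot (Jrel K n k) :=
  (RingQuot.mkAlgHom K (Jrel K n k)).comp (embA K n k)

def chi : AddMonoidAlgebra (FreeAlgebra K (Fin n)) (Fin k → ℤ) →ₐ[K] RingQuot (Jrel K n k) :=
  AddMonoidAlgebra.liftNCAlgHom (fchi K n k) (gchi K n k)
    (fun x y => gchi_central K n k y (fchi K n k x))

theorem chi_single (α : Fin k → ℤ) (h : FreeAlgebra K (Fin n)) :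
    chi K n k (AddMonoidAlgebra.single α h) =
      fchi K n k h * gchi K n k (Multiplicative.ofAdd α) := by
  simp [chi, AddMonoidAlgebra.liftNCAlgHom, AddMonoidAlgebra.liftNCRingHom]

theorem chi_single_zero (h : FreeAlgebra K (Fin n)) :
    chi K n k (AddMonoidAlgebra.single (0 : Fin k → ℤ) h) =
      RingQuot.mkAlgHom K (Jrel K n k) (embA K n k h) := by
  rw [chi_single, show Multiplicative.ofAdd (0 : Fin k → ℤ) = 1 from rfl, map_one, mul_one]
  rfl

theorem chi_Phi (g : FreeAlgebra K (Fin n)) :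
    chi K n k (Phi K n k a g) = RingQuot.mkAlgHom K (Jrel K n k) (phiA K n k a g) := by
  have h : (chi K n k).comp (Phi K n k a) =
      (RingQuot.mkAlgHom K (Jrel K n k)).comp (phiA K n k a) := by
    apply FreeAlgebra.hom_ext
    funext i
    show chi K n k (Phi K n k a (FreeAlgebra.ι K i)) =
      RingQuot.mkAlgHom K (Jrel K n k) (phiA K n k a (FreeAlgebra.ι K i))
    rw [Phi, FreeAlgebra.lift_ι_apply, chi_single, phiA, FreeAlgebra.lift_ι_apply, map_mul,
      pi_tau]
    rw [show fchi K n k (FreeAlgebra.ι K i) =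
      RingQuot.mkAlgHom K (Jrel K n k) (FreeAlgebra.ι K (Sum.inl i)) from by
        rw [fchi, AlgHom.comp_apply, embA, FreeAlgebra.lift_ι_apply]]
  exact DFunLike.congr_fun h g

def psi : FreeAlgebra K (XTT n k) →ₐ[K] AddMonoidAlgebra (FreeAlgebra K (Fin n)) (Fin k → ℤ) :=
  FreeAlgebra.lift K (Sum.elim
    (fun i => AddMonoidAlgebra.single 0 (FreeAlgebra.ι K i))
    (Sum.elim
      (fun j => AddMonoidAlgebra.single (Pi.single j 1) 1)
      (fun j => AddMonoidAlgebra.single (-(Pi.single j 1)) 1)))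

theorem psi_rel : ∀ ⦃x y⦄, Jrel K n k x y → psi K n k x = psi K n k y := by
  intro x y h
  cases h with
  | comm u v =>
      rw [map_mul, map_mul]
      have hv : Commute (psi K n k (FreeAlgebra.ι K (Sum.inr v)))
          (psi K n k (FreeAlgebra.ι K u)) := by
        cases v with
        | inl j =>
            rw [psi, FreeAlgebra.lift_ι_apply]
            exact single_one_comm _ _
        | inr j =>
            rw [psi, FreeAlgebra.lift_ι_apply]
            exact single_one_comm _ _
      exact hv.symm.eq
  | inv j =>
      rw [map_mul, map_one, psi, FreeAlgebra.lift_ι_apply, FreeAlgebra.lift_ι_apply]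
      show AddMonoidAlgebra.single (Pi.single j 1) (1 : FreeAlgebra K (Fin n)) *
        AddMonoidAlgebra.single (-(Pi.single j 1)) 1 = 1
      rw [AddMonoidAlgebra.single_mul_single, mul_one, add_neg_cancel]
      exact (AddMonoidAlgebra.one_def).symm

def psibar : RingQuot (Jrel K n k) →ₐ[K]
    AddMonoidAlgebra (FreeAlgebra K (Fin n)) (Fin k → ℤ) :=
  RingQuot.liftAlgHom K ⟨psi K n k, psi_rel K n k⟩

theorem psibar_mk (x : FreeAlgebra K (XTT n k)) :
    psibar K n k (RingQuot.mkAlgHom K (Jrel K n k) x) = psi K n k x :=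
  RingQuot.liftAlgHom_mkAlgHom_apply K (psi K n k) (psi_rel K n k) x

theorem list_prod_single (l : List (Fin k → ℤ)) :
    ((l.map fun g => AddMonoidAlgebra.single g (1 : FreeAlgebra K (Fin n))).prod :
      AddMonoidAlgebra (FreeAlgebra K (Fin n)) (Fin k → ℤ)) =
      AddMonoidAlgebra.single l.sum 1 := by
  induction l with
  | nil => exact (AddMonoidAlgebra.one_def).symm
  | cons g l ih =>
      rw [List.map_cons, List.prod_cons, ih, AddMonoidAlgebra.single_mul_single, one_mul,
        List.sum_cons]

theorem psi_tau (α : Fin k → ℤ) :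
    psi K n k (tau K n k α) = AddMonoidAlgebra.single α 1 := by
  rw [tau, map_list_prod (psi K n k), List.map_ofFn]
  have hfac : ∀ j : Fin k,
      ((psi K n k) ∘ fun j : Fin k =>
        (if 0 ≤ α j then FreeAlgebra.ι K (Sum.inr (Sum.inl j) : XTT n k)
          else FreeAlgebra.ι K (Sum.inr (Sum.inr j) : XTT n k)) ^ (α j).natAbs) j =
      AddMonoidAlgebra.single ((α j) • Pi.single j (1 : ℤ)) 1 := by
    intro j
    simp only [Function.comp_apply, map_pow, apply_ite (psi K n k)]
    by_cases h : 0 ≤ α j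
    · rw [if_pos h, psi, FreeAlgebra.lift_ι_apply]
      show (AddMonoidAlgebra.single (Pi.single j 1) (1 : FreeAlgebra K (Fin n))) ^
        (α j).natAbs = _
      rw [AddMonoidAlgebra.single_pow, one_pow]
      congr 1
      have h1 : α j = ((α j).natAbs : ℤ) := by omega
      conv_rhs => rw [h1]
      exact (natCast_zsmul _ _).symm
    · rw [if_neg h, psi, FreeAlgebra.lift_ι_apply]
      show (AddMonoidAlgebra.single (-(Pi.single j 1)) (1 : FreeAlgebra K (Fin n))) ^
        (α j).natAbs = _
      rw [AddMonoidAlgebra.single_pow, one_pow]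
      congr 1
      have h1 : α j = -(((α j).natAbs : ℤ)) := by omega
      conv_rhs => rw [h1]
      rw [neg_zsmul, natCast_zsmul, smul_neg]
  rw [show (List.ofFn ((psi K n k) ∘ fun j : Fin k =>
      (if 0 ≤ α j then FreeAlgebra.ι K (Sum.inr (Sum.inl j) : XTT n k)
        else FreeAlgebra.ι K (Sum.inr (Sum.inr j) : XTT n k)) ^ (α j).natAbs)) =
    List.ofFn fun j => AddMonoidAlgebra.single ((α j) • Pi.single j (1 : ℤ))
      (1 : FreeAlgebra K (Fin n)) from congrArg List.ofFn (funext hfac)]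
  rw [show (List.ofFn fun j => AddMonoidAlgebra.single ((α j) • Pi.single j (1 : ℤ))
      (1 : FreeAlgebra K (Fin n))) =
    (List.ofFn fun j => ((α j) • Pi.single j (1 : ℤ) : Fin k → ℤ)).map
      (fun g => AddMonoidAlgebra.single g (1 : FreeAlgebra K (Fin n))) from by
    rw [List.map_ofFn]
    rfl]
  rw [list_prod_single, List.sum_ofFn]
  congr 1
  have h2 : ∀ j : Fin k, ((α j) • Pi.single j (1 : ℤ) : Fin k → ℤ) = Pi.single j (α j) := by
    intro j
    ext i
    simp [Pi.single_apply]
  rw [show (fun j => ((α j) • Pi.single j (1 : ℤ) : Fin k → ℤ)) =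
    fun j => Pi.single j (α j) from funext h2]
  exact Finset.univ_sum_single α

theorem psi_embA (g : FreeAlgebra K (Fin n)) :
    psi K n k (embA K n k g) = AddMonoidAlgebra.single (0 : Fin k → ℤ) g := by
  induction g using FreeAlgebra.induction with
  | grade0 c =>
      rw [AlgHom.commutes, AlgHom.commutes]
      rfl
  | grade1 i =>
      rw [embA, FreeAlgebra.lift_ι_apply, psi, FreeAlgebra.lift_ι_apply]
      rfl
  | mul u v hu hv =>
      rw [map_mul, map_mul, hu, hv, AddMonoidAlgebra.single_mul_single, zero_add]
  | add u v hu hv =>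
      rw [map_add, map_add, hu, hv]
      exact (AddMonoidAlgebra.single_add 0 _ _).symm

theorem psi_phiA (g : FreeAlgebra K (Fin n)) :
    psi K n k (phiA K n k a g) = Phi K n k a g := by
  have h : (psi K n k).comp (phiA K n k a) = Phi K n k a := by
    apply FreeAlgebra.hom_ext
    funext i
    show psi K n k (phiA K n k a (FreeAlgebra.ι K i)) = Phi K n k a (FreeAlgebra.ι K i)
    rw [phiA, FreeAlgebra.lift_ι_apply, map_mul, psi_tau, Phi, FreeAlgebra.lift_ι_apply]
    rw [show psi K n k (FreeAlgebra.ι K (Sum.inl i)) =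
      AddMonoidAlgebra.single (0 : Fin k → ℤ) (FreeAlgebra.ι K i) from by
        rw [psi, FreeAlgebra.lift_ι_apply]
        rfl]
    rw [AddMonoidAlgebra.single_mul_single, mul_one, zero_add]
  exact DFunLike.congr_fun h g

end Hom2025X
end

/-- **The homogeneous part of an ideal via the extension along `φ̄_A`.**
Let `I = (f₁,…,f_r) ⊆ K⟨X⟩`, let `A ∈ ℤ^{n×k}` have rows `a i`, and let `I^{φ̄_A}` be the
two-sided ideal of `𝒜 = K⟨X,T,T⁻¹⟩/J` generated by the `φ̄_A(fᵢ)`.  Then `hom_A(I)`, the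
two-sided ideal generated by all `deg_A`-homogeneous elements of `I`, equals
`{ f ∈ K⟨X⟩ : π(ι(f)) ∈ I^{φ̄_A} }`. -/
theorem homogeneousPart_eq_contraction (K : Type*) [Field K] (n k r : ℕ)
    (a : Fin n → Fin k → ℤ) (f : Fin r → FreeAlgebra K (Fin n)) :
    idealSpan {g | g ∈ idealSpan (Set.range f) ∧ Homog K a g} =
      {g | RingQuot.mkAlgHom K (Jrel K n k) (embA K n k g) ∈
        idealSpan (Set.range fun i =>
          RingQuot.mkAlgHom K (Jrel K n k) (phiA K n k a (f i)))} := by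
  ext g
  simp only [Set.mem_setOf_eq]
  constructor
  · intro hg
    have hB := Hom2025X.B_sub K n k a f hg
    have h := Hom2025X.map_mem_idealSpan (Hom2025X.chi K n k) hB
    rw [Hom2025X.chi_single_zero] at h
    have heq : (fun i => Hom2025X.chi K n k ((fun i => Hom2025X.Phi K n k a (f i)) i)) =
        fun i => RingQuot.mkAlgHom K (Jrel K n k) (phiA K n k a (f i)) :=
      funext fun i => Hom2025X.chi_Phi K n k a (f i)
    rwa [heq] at h
  · intro hg
    have h := Hom2025X.map_mem_idealSpan (Hom2025X.psibar K n k) hg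
    rw [Hom2025X.psibar_mk, Hom2025X.psi_embA] at h
    have heq : (fun i => Hom2025X.psibar K n k
        ((fun i => RingQuot.mkAlgHom K (Jrel K n k) (phiA K n k a (f i))) i)) =
        fun i => Hom2025X.Phi K n k a (f i) := by
      funext i
      show Hom2025X.psibar K n k (RingQuot.mkAlgHom K (Jrel K n k) (phiA K n k a (f i))) = _
      rw [Hom2025X.psibar_mk, Hom2025X.psi_phiA]
    rw [heq] at h
    exact Hom2025X.B_sup K n k a f h
end

section
/- Let K be a field, X = {x₁,…,xₙ}, and let I_ρ be a right ideal of K⟨X⟩ with right generating set F. Let I_ρ^{φ̄} be the right ideal of the quotient algebra ℬ = K⟨X,T,T⁻¹⟩/J generated by {φ̄(f) : f ∈ F}. Then mon(I_ρ) = { f ∈ K⟨X⟩ : π(ι(f)) ∈ I_ρ^{φ̄} }, i.e., the monomial part of I_ρ consists exactly of those polynomials in K⟨X⟩ whose residue class modulo J lies in the extension I_ρ^{φ̄}. -/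
open scoped BigOperators

/-- The alphabet `X ∪ T ∪ T⁻¹` with `n` letters `xᵢ`, `n` letters `tᵢ` and `n` letters
`tᵢ⁻¹` (one pair `tᵢ, tᵢ⁻¹` for each `xᵢ`). -/
abbrev XTTn (n : ℕ) := Fin n ⊕ (Fin n ⊕ Fin n)

/-- The relations generating the ideal `J ⊆ K⟨X,T,T⁻¹⟩`: the commutators
`xᵢt_j − t_jxᵢ` (`1 ≤ i,j ≤ n`) and `1 − t_j t_j⁻¹` (`1 ≤ j ≤ n`).  The quotient algebra
`ℬ = K⟨X,T,T⁻¹⟩/J` is `RingQuot (Brel K n)` and the quotient map `π` is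
`RingQuot.mkAlgHom K (Brel K n)`. -/
inductive Brel (K : Type*) [Field K] (n : ℕ) :
    FreeAlgebra K (XTTn n) → FreeAlgebra K (XTTn n) → Prop
  | comm (i j : Fin n) :
      Brel K n (FreeAlgebra.ι K (Sum.inl i) * FreeAlgebra.ι K (Sum.inr (Sum.inl j)))
        (FreeAlgebra.ι K (Sum.inr (Sum.inl j)) * FreeAlgebra.ι K (Sum.inl i))
  | inv (j : Fin n) :
      Brel K n
        (FreeAlgebra.ι K (Sum.inr (Sum.inl j)) * FreeAlgebra.ι K (Sum.inr (Sum.inr j))) 1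

/-- The canonical embedding `ι : K⟨X⟩ → K⟨X,T,T⁻¹⟩`, `xᵢ ↦ xᵢ`. -/
noncomputable def embB (K : Type*) [Field K] (n : ℕ) :
    FreeAlgebra K (Fin n) →ₐ[K] FreeAlgebra K (XTTn n) :=
  FreeAlgebra.lift K fun i => FreeAlgebra.ι K (Sum.inl i)

/-- The algebra homomorphism `φ : K⟨X⟩ → K⟨X,T,T⁻¹⟩`, `xᵢ ↦ xᵢtᵢ`. -/
noncomputable def phiB (K : Type*) [Field K] (n : ℕ) :
    FreeAlgebra K (Fin n) →ₐ[K] FreeAlgebra K (XTTn n) :=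
  FreeAlgebra.lift K fun i =>
    FreeAlgebra.ι K (Sum.inl i) * FreeAlgebra.ι K (Sum.inr (Sum.inl i))

/-- The monomial of `K⟨X⟩` corresponding to a word `w ∈ ⟨X⟩`. -/
noncomputable def monoW (K : Type*) [Field K] {n : ℕ} (w : FreeMonoid (Fin n)) :
    FreeAlgebra K (Fin n) :=
  ((FreeMonoid.toList w).map (FreeAlgebra.ι K)).prod

/-! ### Generic lemmas about `rightIdealSpan` -/

section RIS

variable {A : Type*} [Semiring A] {S : Set A}

theorem rightIdealSpan.zero_mem (S : Set A) : (0 : A) ∈ rightIdealSpan S :=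
  ⟨0, Fin.elim0, Fin.elim0, fun i => i.elim0, by simp⟩

theorem rightIdealSpan.mul_mem {s : A} (hs : s ∈ S) (q : A) :
    s * q ∈ rightIdealSpan S :=
  ⟨1, fun _ => s, fun _ => q, fun _ => hs, by simp⟩

theorem rightIdealSpan.add_mem {x y : A} (hx : x ∈ rightIdealSpan S)
    (hy : y ∈ rightIdealSpan S) : x + y ∈ rightIdealSpan S := by
  obtain ⟨d₁, f₁, q₁, hf₁, rfl⟩ := hx
  obtain ⟨d₂, f₂, q₂, hf₂, rfl⟩ := hy
  refine ⟨d₁ + d₂, Fin.append f₁ f₂, Fin.append q₁ q₂, ?_, ?_⟩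
  · intro i
    refine Fin.addCases (fun i => ?_) (fun i => ?_) i
    · simpa [Fin.append_left] using hf₁ i
    · simpa [Fin.append_right] using hf₂ i
  · rw [Fin.sum_univ_add]
    simp [Fin.append_left, Fin.append_right]

theorem rightIdealSpan.sum_mem {ι : Type*} (s : Finset ι) {x : ι → A}
    (h : ∀ i ∈ s, x i ∈ rightIdealSpan S) : (∑ i ∈ s, x i) ∈ rightIdealSpan S := by
  classical
  induction s using Finset.cons_induction with
  | empty => simpa using rightIdealSpan.zero_mem S
  | cons a s ha ih =>
      rw [Finset.sum_cons]
      exact rightIdealSpan.add_mem (h _ (Finset.mem_cons_self _ _))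
        (ih fun i hi => h i (Finset.mem_cons_of_mem hi))

theorem rightIdealSpan.mul_right_mem {x : A} (hx : x ∈ rightIdealSpan S) (r : A) :
    x * r ∈ rightIdealSpan S := by
  obtain ⟨d, f, q, hf, rfl⟩ := hx
  exact ⟨d, f, fun i => q i * r, hf, by rw [Finset.sum_mul]; simp [mul_assoc]⟩

theorem rightIdealSpan.smul_mem {R : Type*} [CommSemiring R] [Algebra R A] {x : A}
    (c : R) (hx : x ∈ rightIdealSpan S) : c • x ∈ rightIdealSpan S := by
  obtain ⟨d, f, q, hf, rfl⟩ := hx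
  exact ⟨d, f, fun i => c • q i, hf, by rw [Finset.smul_sum]; simp [mul_smul_comm]⟩

end RIS

/-! ### The tagging homomorphism into the free group -/

section Tag

variable {n : ℕ}

/-- The tagging monoid homomorphism from words to the free group. -/
noncomputable def tagG (n : ℕ) : FreeMonoid (Fin n) →* FreeGroup (Fin n) :=
  FreeMonoid.lift FreeGroup.of

theorem tagG_eq_mk (w : FreeMonoid (Fin n)) :
    tagG n w = FreeGroup.mk ((FreeMonoid.toList w).map fun i => (i, true)) := by
  induction w using FreeMonoid.recOn with
  | one =>
      rw [map_one]
      simp [FreeGroup.one_eq_mk]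
  | of_mul x xs hxs =>
      rw [map_mul, hxs, tagG, FreeMonoid.lift_eval_of]
      rw [show FreeGroup.of x = FreeGroup.mk [(x, true)] from rfl, FreeGroup.mul_mk]
      rw [FreeMonoid.toList_of_mul, List.map_cons]
      rfl

theorem reduce_map_true (l : List (Fin n)) :
    FreeGroup.reduce (l.map fun i => (i, true)) = l.map fun i => (i, true) := by
  induction l with
  | nil => rfl
  | cons a l ih =>
      rw [List.map_cons, FreeGroup.reduce.cons, ih]
      cases l with
      | nil => rfl
      | cons b l' => simp

theorem tagG_injective : Function.Injective (tagG n) := by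
  intro w w' h
  rw [tagG_eq_mk, tagG_eq_mk] at h
  have h2 := congrArg FreeGroup.toWord h
  rw [FreeGroup.toWord_mk, FreeGroup.toWord_mk, reduce_map_true, reduce_map_true] at h2
  have hinj : Function.Injective (fun i : Fin n => (i, true)) := fun a b hab =>
    congrArg Prod.fst hab
  have h3 : FreeMonoid.toList w = FreeMonoid.toList w' :=
    List.map_injective_iff.mpr hinj h2
  exact FreeMonoid.toList.injective h3

end Tag

/-! ### Basic lemmas about `monoW` -/

section MonoW

variable (K : Type*) [Field K] (n : ℕ)

theorem monoW_one : monoW K (1 : FreeMonoid (Fin n)) = 1 := rfl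

theorem monoW_cons (x : Fin n) (xs : FreeMonoid (Fin n)) :
    monoW K (FreeMonoid.of x * xs) = FreeAlgebra.ι K x * monoW K xs := by
  rw [monoW, monoW, FreeMonoid.toList_of_mul, List.map_cons, List.prod_cons]

theorem monoW_mul (w v : FreeMonoid (Fin n)) :
    monoW K (w * v) = monoW K w * monoW K v := by
  rw [monoW, monoW, monoW, FreeMonoid.toList_mul, List.map_append, List.prod_append]

/-- Identification of the free algebra with the monoid algebra on words. -/
noncomputable def toMA : FreeAlgebra K (Fin n) ≃ₐ[K] MonoidAlgebra K (FreeMonoid (Fin n)) :=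
  FreeAlgebra.equivMonoidAlgebraFreeMonoid

theorem toMA_ι (x : Fin n) :
    toMA K n (FreeAlgebra.ι K x) = MonoidAlgebra.single (FreeMonoid.of x) 1 := by
  simp [toMA, FreeAlgebra.equivMonoidAlgebraFreeMonoid]

theorem toMA_monoW (w : FreeMonoid (Fin n)) :
    toMA K n (monoW K w) = MonoidAlgebra.single w 1 := by
  induction w using FreeMonoid.recOn with
  | one => rw [monoW_one, map_one, MonoidAlgebra.one_def]
  | of_mul x xs hxs =>
      rw [monoW_cons, map_mul, hxs, toMA_ι, MonoidAlgebra.single_mul_single, one_mul]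

theorem toMA_symm_single (w : FreeMonoid (Fin n)) (c : K) :
    (toMA K n).symm (MonoidAlgebra.single w c) = c • monoW K w := by
  apply (toMA K n).injective
  rw [AlgEquiv.apply_symm_apply, map_smul, toMA_monoW]
  rw [MonoidAlgebra.smul_single, smul_eq_mul, mul_one]

theorem repr_eq (f : FreeAlgebra K (Fin n)) :
    f = ∑ w ∈ (toMA K n f).coeff.support, ((toMA K n f).coeff w) • monoW K w := by
  have h : ((toMA K n f).coeff.sum fun w c => MonoidAlgebra.single w c) = toMA K n f :=
    MonoidAlgebra.sum_coeff_single _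
  calc f = (toMA K n).symm (toMA K n f) := (AlgEquiv.symm_apply_apply _ _).symm
    _ = (toMA K n).symm
        (∑ w ∈ (toMA K n f).coeff.support, MonoidAlgebra.single w ((toMA K n f).coeff w)) := by
          rw [show (∑ w ∈ (toMA K n f).coeff.support, MonoidAlgebra.single w ((toMA K n f).coeff w))
            = ((toMA K n f).coeff.sum fun w c => MonoidAlgebra.single w c) from rfl, h]
    _ = ∑ w ∈ (toMA K n f).coeff.support, (toMA K n).symm (MonoidAlgebra.single w ((toMA K n f).coeff w)) :=
          map_sum _ _ _
    _ = ∑ w ∈ (toMA K n f).coeff.support, ((toMA K n f).coeff w) • monoW K w := by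
          simp only [toMA_symm_single]

theorem monoW_span (a : FreeAlgebra K (Fin n)) :
    a ∈ Submodule.span K (Set.range (monoW K (n := n))) := by
  rw [repr_eq K n a]
  exact Submodule.sum_mem _ fun w _ =>
    Submodule.smul_mem _ _ (Submodule.subset_span ⟨w, rfl⟩)

end MonoW

/-! ### The evaluation of `ℬ` in the group-tagged monoid algebra -/

section Eval

variable (K : Type*) [Field K] (n : ℕ)

/-- Target algebra: the monoid algebra on pairs (word, free group element). -/
abbrev Rtag := MonoidAlgebra K (FreeMonoid (Fin n) × FreeGroup (Fin n))

/-- Images of the generators. -/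
noncomputable def Egen : XTTn n → Rtag K n
  | Sum.inl i => MonoidAlgebra.single (FreeMonoid.of i, 1) 1
  | Sum.inr (Sum.inl j) => MonoidAlgebra.single (1, FreeGroup.of j) 1
  | Sum.inr (Sum.inr j) => MonoidAlgebra.single (1, (FreeGroup.of j)⁻¹) 1

noncomputable def E0 : FreeAlgebra K (XTTn n) →ₐ[K] Rtag K n :=
  FreeAlgebra.lift K (Egen K n)

theorem E0_rel {x y : FreeAlgebra K (XTTn n)} (h : Brel K n x y) :
    E0 K n x = E0 K n y := by
  cases h with
  | comm i j =>
      simp only [map_mul, E0, FreeAlgebra.lift_ι_apply, Egen,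
        MonoidAlgebra.single_mul_single, Prod.mk_mul_mk, one_mul, mul_one]
  | inv j =>
      simp only [map_mul, map_one, E0, FreeAlgebra.lift_ι_apply, Egen,
        MonoidAlgebra.single_mul_single, Prod.mk_mul_mk, one_mul, mul_one,
        mul_inv_cancel]
      rw [show ((1, 1) : FreeMonoid (Fin n) × FreeGroup (Fin n)) = 1 from rfl,
        ← MonoidAlgebra.one_def]

noncomputable def EB : RingQuot (Brel K n) →ₐ[K] Rtag K n :=
  RingQuot.liftAlgHom K ⟨E0 K n, fun _ _ h => E0_rel K n h⟩

noncomputable def EA : FreeAlgebra K (Fin n) →ₐ[K] Rtag K n :=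
  (EB K n).comp ((RingQuot.mkAlgHom K (Brel K n)).comp (embB K n))

noncomputable def EPhi : FreeAlgebra K (Fin n) →ₐ[K] Rtag K n :=
  (EB K n).comp ((RingQuot.mkAlgHom K (Brel K n)).comp (phiB K n))

theorem EA_ι (x : Fin n) :
    EA K n (FreeAlgebra.ι K x) = MonoidAlgebra.single (FreeMonoid.of x, 1) 1 := by
  rw [EA, AlgHom.comp_apply, AlgHom.comp_apply, embB, FreeAlgebra.lift_ι_apply, EB,
    RingQuot.liftAlgHom_mkAlgHom_apply, E0, FreeAlgebra.lift_ι_apply]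
  rfl

theorem EPhi_ι (x : Fin n) :
    EPhi K n (FreeAlgebra.ι K x) = MonoidAlgebra.single (FreeMonoid.of x, FreeGroup.of x) 1 := by
  rw [EPhi, AlgHom.comp_apply, AlgHom.comp_apply, phiB, FreeAlgebra.lift_ι_apply, EB,
    RingQuot.liftAlgHom_mkAlgHom_apply, map_mul, E0, FreeAlgebra.lift_ι_apply,
    FreeAlgebra.lift_ι_apply]
  rw [show Egen K n (Sum.inl x) = MonoidAlgebra.single (FreeMonoid.of x, 1) 1 from rfl,
    show Egen K n (Sum.inr (Sum.inl x)) = MonoidAlgebra.single (1, FreeGroup.of x) 1 from rfl,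
    MonoidAlgebra.single_mul_single, Prod.mk_mul_mk, one_mul, mul_one]
  rw [one_mul]

theorem EA_monoW (w : FreeMonoid (Fin n)) :
    EA K n (monoW K w) = MonoidAlgebra.single (w, 1) 1 := by
  induction w using FreeMonoid.recOn with
  | one => rw [monoW_one, map_one, MonoidAlgebra.one_def]; rfl
  | of_mul x xs hxs =>
      rw [monoW_cons, map_mul, hxs, EA_ι, MonoidAlgebra.single_mul_single,
        Prod.mk_mul_mk, one_mul, mul_one]

theorem EPhi_monoW (w : FreeMonoid (Fin n)) :
    EPhi K n (monoW K w) = MonoidAlgebra.single (w, tagG n w) 1 := by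
  induction w using FreeMonoid.recOn with
  | one => rw [monoW_one, map_one, MonoidAlgebra.one_def, map_one]; rfl
  | of_mul x xs hxs =>
      rw [monoW_cons, map_mul, hxs, EPhi_ι, MonoidAlgebra.single_mul_single,
        Prod.mk_mul_mk, one_mul, map_mul, tagG, FreeMonoid.lift_eval_of]

end Eval

/-! ### The untagging linear maps -/

section Lam

variable (K : Type*) [Field K] (n : ℕ)

noncomputable def lam (ν : FreeGroup (Fin n)) : Rtag K n →ₗ[K] FreeAlgebra K (Fin n) :=
  (Finsupp.lsum K fun p : FreeMonoid (Fin n) × FreeGroup (Fin n) =>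
    LinearMap.toSpanSingleton K _ (if (tagG n p.1)⁻¹ * p.2 = ν then monoW K p.1 else 0))
  ∘ₗ (MonoidAlgebra.coeffLinearEquiv K).toLinearMap

theorem lam_single (ν : FreeGroup (Fin n)) (p : FreeMonoid (Fin n) × FreeGroup (Fin n))
    (c : K) :
    lam K n ν (MonoidAlgebra.single p c)
      = c • (if (tagG n p.1)⁻¹ * p.2 = ν then monoW K p.1 else 0) := by
  rw [lam, LinearMap.comp_apply]
  erw [Finsupp.lsum_single]
  rw [LinearMap.toSpanSingleton_apply]

theorem lam_single_mul (ν : FreeGroup (Fin n)) (w : FreeMonoid (Fin n)) (r : Rtag K n) :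
    lam K n ν (MonoidAlgebra.single (w, tagG n w) (1 : K) * r)
      = monoW K w * lam K n ν r := by
  refine MonoidAlgebra.induction r ?_ ?_
  · simp
  · intro a b f _ _ ih
    rw [mul_add, map_add, map_add, mul_add, ih]
    congr 1
    obtain ⟨m, γ⟩ := a
    rw [MonoidAlgebra.single_mul_single, Prod.mk_mul_mk, one_mul, lam_single, lam_single]
    dsimp only
    have hcond : ((tagG n (w * m))⁻¹ * (tagG n w * γ) = ν) = ((tagG n m)⁻¹ * γ = ν) := by
      rw [map_mul, mul_inv_rev, mul_assoc, inv_mul_cancel_left]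
    simp only [hcond]
    split_ifs with h
    · rw [monoW_mul, mul_smul_comm]
    · simp

theorem lam_EPhi_mul (ν : FreeGroup (Fin n)) (p : FreeAlgebra K (Fin n)) (r : Rtag K n) :
    lam K n ν (EPhi K n p * r) = p * lam K n ν r := by
  have hp := monoW_span K n p
  induction hp using Submodule.span_induction with
  | mem x h =>
      obtain ⟨w, rfl⟩ := h
      rw [EPhi_monoW]
      exact lam_single_mul K n ν w r
  | zero => simp
  | add x y hx hy ihx ihy => rw [map_add, add_mul, map_add, ihx, ihy, add_mul]
  | smul a x hx ihx => rw [map_smul, smul_mul_assoc, map_smul, ihx, smul_mul_assoc]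

theorem lam_EA (f : FreeAlgebra K (Fin n)) (w₀ : FreeMonoid (Fin n)) :
    lam K n ((tagG n w₀)⁻¹) (EA K n f) = ((toMA K n f).coeff w₀) • monoW K w₀ := by
  classical
  conv_lhs => rw [repr_eq K n f]
  rw [map_sum, map_sum]
  simp only [map_smul, EA_monoW, lam_single]
  simp only [one_smul, mul_one]
  have hterm : ∀ x ∈ (toMA K n f).coeff.support,
      ((toMA K n f).coeff x) • (if (tagG n x)⁻¹ = (tagG n w₀)⁻¹ then monoW K x else 0)
        = if x = w₀ then ((toMA K n f).coeff x) • monoW K x else 0 := by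
    intro x _
    by_cases h : x = w₀
    · subst h
      rw [if_pos rfl, if_pos rfl]
    · have h2 : ¬((tagG n x)⁻¹ = (tagG n w₀)⁻¹) := fun hh =>
        h (tagG_injective (inv_injective hh))
      rw [if_neg h2, if_neg h, smul_zero]
  rw [Finset.sum_congr rfl hterm,
    Finset.sum_ite_eq' ((toMA K n f).coeff.support) w₀ (fun w => (toMA K n f).coeff w • monoW K w)]
  by_cases hw : w₀ ∈ (toMA K n f).coeff.support
  · rw [if_pos hw]
  · rw [if_neg hw, Finsupp.notMem_support_iff.mp hw, zero_smul]

end Lam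

/-! ### Quotient computations for the easy inclusion -/

section Quot

variable (K : Type*) [Field K] (n : ℕ)

noncomputable def tPos (l : List (Fin n)) : FreeAlgebra K (XTTn n) :=
  (l.map fun j => FreeAlgebra.ι K (Sum.inr (Sum.inl j))).prod

noncomputable def tNeg (l : List (Fin n)) : FreeAlgebra K (XTTn n) :=
  (l.reverse.map fun j => FreeAlgebra.ι K (Sum.inr (Sum.inr j))).prod

theorem pi_t_comm (j : Fin n) (a : FreeAlgebra K (Fin n)) :
    RingQuot.mkAlgHom K (Brel K n) (FreeAlgebra.ι K (Sum.inr (Sum.inl j)))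
        * RingQuot.mkAlgHom K (Brel K n) (embB K n a)
      = RingQuot.mkAlgHom K (Brel K n) (embB K n a)
        * RingQuot.mkAlgHom K (Brel K n) (FreeAlgebra.ι K (Sum.inr (Sum.inl j))) := by
  induction a using FreeAlgebra.induction with
  | grade0 r =>
      rw [AlgHom.commutes, AlgHom.commutes]
      exact (Algebra.commutes r _).symm
  | grade1 x =>
      rw [embB, FreeAlgebra.lift_ι_apply, ← map_mul, ← map_mul]
      exact (RingQuot.mkAlgHom_rel K (Brel.comm x j)).symm
  | mul a b ha hb =>
      rw [map_mul, map_mul, ← mul_assoc, ha, mul_assoc, hb, ← mul_assoc]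
  | add a b ha hb =>
      rw [map_add, map_add, mul_add, add_mul, ha, hb]

theorem pi_tPos_tNeg (l : List (Fin n)) :
    RingQuot.mkAlgHom K (Brel K n) (tPos K n l)
      * RingQuot.mkAlgHom K (Brel K n) (tNeg K n l) = 1 := by
  induction l with
  | nil =>
      rw [tPos, tNeg]
      simp
  | cons j l ih =>
      have h1 : tPos K n (j :: l)
          = FreeAlgebra.ι K (Sum.inr (Sum.inl j)) * tPos K n l := by
        rw [tPos, tPos, List.map_cons, List.prod_cons]
      have h2 : tNeg K n (j :: l)
          = tNeg K n l * FreeAlgebra.ι K (Sum.inr (Sum.inr j)) := by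
        rw [tNeg, tNeg, List.reverse_cons, List.map_append, List.prod_append]
        simp
      rw [h1, h2, map_mul, map_mul]
      calc RingQuot.mkAlgHom K (Brel K n) (FreeAlgebra.ι K (Sum.inr (Sum.inl j)))
              * RingQuot.mkAlgHom K (Brel K n) (tPos K n l)
              * (RingQuot.mkAlgHom K (Brel K n) (tNeg K n l)
                * RingQuot.mkAlgHom K (Brel K n) (FreeAlgebra.ι K (Sum.inr (Sum.inr j))))
          = RingQuot.mkAlgHom K (Brel K n) (FreeAlgebra.ι K (Sum.inr (Sum.inl j)))
              * (RingQuot.mkAlgHom K (Brel K n) (tPos K n l)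
                * RingQuot.mkAlgHom K (Brel K n) (tNeg K n l))
              * RingQuot.mkAlgHom K (Brel K n) (FreeAlgebra.ι K (Sum.inr (Sum.inr j))) := by
            rw [mul_assoc, mul_assoc, mul_assoc]
        _ = RingQuot.mkAlgHom K (Brel K n) (FreeAlgebra.ι K (Sum.inr (Sum.inl j)))
              * RingQuot.mkAlgHom K (Brel K n) (FreeAlgebra.ι K (Sum.inr (Sum.inr j))) := by
            rw [ih, mul_one]
        _ = 1 := by
            rw [← map_mul, RingQuot.mkAlgHom_rel K (Brel.inv j), map_one]

theorem pi_phi_monoW (w : FreeMonoid (Fin n)) :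
    RingQuot.mkAlgHom K (Brel K n) (phiB K n (monoW K w))
      = RingQuot.mkAlgHom K (Brel K n) (embB K n (monoW K w))
        * RingQuot.mkAlgHom K (Brel K n) (tPos K n (FreeMonoid.toList w)) := by
  induction w using FreeMonoid.recOn with
  | one =>
      rw [monoW_one, map_one, map_one, map_one]
      rw [show FreeMonoid.toList (1 : FreeMonoid (Fin n)) = [] from rfl, tPos]
      simp
  | of_mul x xs hxs =>
      rw [monoW_cons, map_mul, map_mul, phiB, FreeAlgebra.lift_ι_apply, ← phiB]
      rw [map_mul, map_mul, hxs]
      rw [FreeMonoid.toList_of_mul,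
        show tPos K n (x :: FreeMonoid.toList xs)
          = FreeAlgebra.ι K (Sum.inr (Sum.inl x)) * tPos K n (FreeMonoid.toList xs) by
            rw [tPos, tPos, List.map_cons, List.prod_cons]]
      rw [map_mul, map_mul, embB, FreeAlgebra.lift_ι_apply, ← embB]
      calc RingQuot.mkAlgHom K (Brel K n) (FreeAlgebra.ι K (Sum.inl x))
              * RingQuot.mkAlgHom K (Brel K n) (FreeAlgebra.ι K (Sum.inr (Sum.inl x)))
              * (RingQuot.mkAlgHom K (Brel K n) (embB K n (monoW K xs))
                * RingQuot.mkAlgHom K (Brel K n) (tPos K n (FreeMonoid.toList xs)))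
          = RingQuot.mkAlgHom K (Brel K n) (FreeAlgebra.ι K (Sum.inl x))
              * (RingQuot.mkAlgHom K (Brel K n) (FreeAlgebra.ι K (Sum.inr (Sum.inl x)))
                * RingQuot.mkAlgHom K (Brel K n) (embB K n (monoW K xs)))
              * RingQuot.mkAlgHom K (Brel K n) (tPos K n (FreeMonoid.toList xs)) := by
            rw [mul_assoc, mul_assoc, mul_assoc]
        _ = RingQuot.mkAlgHom K (Brel K n) (FreeAlgebra.ι K (Sum.inl x))
              * (RingQuot.mkAlgHom K (Brel K n) (embB K n (monoW K xs))
                * RingQuot.mkAlgHom K (Brel K n) (FreeAlgebra.ι K (Sum.inr (Sum.inl x))))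
              * RingQuot.mkAlgHom K (Brel K n) (tPos K n (FreeMonoid.toList xs)) := by
            rw [pi_t_comm]
        _ = RingQuot.mkAlgHom K (Brel K n) (FreeAlgebra.ι K (Sum.inl x))
              * RingQuot.mkAlgHom K (Brel K n) (embB K n (monoW K xs))
              * (RingQuot.mkAlgHom K (Brel K n) (FreeAlgebra.ι K (Sum.inr (Sum.inl x)))
                * RingQuot.mkAlgHom K (Brel K n) (tPos K n (FreeMonoid.toList xs))) := by
            rw [mul_assoc, mul_assoc, mul_assoc]

theorem pi_emb_monoW (w : FreeMonoid (Fin n)) :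
    RingQuot.mkAlgHom K (Brel K n) (embB K n (monoW K w))
      = RingQuot.mkAlgHom K (Brel K n) (phiB K n (monoW K w))
        * RingQuot.mkAlgHom K (Brel K n) (tNeg K n (FreeMonoid.toList w)) := by
  rw [pi_phi_monoW, mul_assoc, pi_tPos_tNeg, mul_one]

end Quot

/-- **The monomial part of a right ideal via the extension along `φ̄`.**
Let `I_ρ` be the right ideal of `K⟨X⟩` generated by `F`, and let `I_ρ^{φ̄}` be the right
ideal of `ℬ = K⟨X,T,T⁻¹⟩/J` generated by `{φ̄(f) : f ∈ F}`.  Then `mon(I_ρ)`, the right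
ideal generated by all monomials contained in `I_ρ`, equals
`{ f ∈ K⟨X⟩ : π(ι(f)) ∈ I_ρ^{φ̄} }`. -/
theorem monomialPart_eq_contraction (K : Type*) [Field K] (n : ℕ)
    (F : Set (FreeAlgebra K (Fin n))) :
    rightIdealSpan {m | (∃ w : FreeMonoid (Fin n), m = monoW K w) ∧ m ∈ rightIdealSpan F} =
      {f | RingQuot.mkAlgHom K (Brel K n) (embB K n f) ∈
        rightIdealSpan ((fun g => RingQuot.mkAlgHom K (Brel K n) (phiB K n g)) '' F)} := by
  ext f
  simp only [Set.mem_setOf_eq]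
  constructor
  · rintro ⟨d, M, Q, hM, rfl⟩
    rw [map_sum, map_sum]
    refine rightIdealSpan.sum_mem _ fun i _ => ?_
    obtain ⟨⟨w, hw⟩, hmem⟩ := hM i
    obtain ⟨d', g, q, hg, hrep⟩ := hmem
    rw [hw] at hrep
    rw [map_mul, map_mul, hw, pi_emb_monoW, hrep, map_sum, map_sum]
    rw [show (∑ j, RingQuot.mkAlgHom K (Brel K n) (phiB K n (g j * q j)))
        = ∑ j, RingQuot.mkAlgHom K (Brel K n) (phiB K n (g j))
            * RingQuot.mkAlgHom K (Brel K n) (phiB K n (q j)) by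
      simp [map_mul]]
    rw [Finset.sum_mul, Finset.sum_mul]
    refine rightIdealSpan.sum_mem _ fun j _ => ?_
    rw [mul_assoc, mul_assoc]
    exact rightIdealSpan.mul_mem (Set.mem_image_of_mem _ (hg j)) _
  · intro hf
    obtain ⟨d, gB, qB, hgB, hEq⟩ := hf
    choose g hgF hgEq using hgB
    have hEA : EA K n f = ∑ i, EPhi K n (g i) * (EB K n (qB i)) := by
      have h1 := congrArg (EB K n) hEq
      rw [map_sum] at h1
      simp only [map_mul] at h1
      rw [show EA K n f = EB K n (RingQuot.mkAlgHom K (Brel K n) (embB K n f)) from rfl, h1]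
      refine Finset.sum_congr rfl fun i _ => ?_
      rw [← hgEq i]
      rfl
    have key : ∀ w₀ ∈ (toMA K n f).coeff.support, monoW K w₀ ∈ rightIdealSpan F := by
      intro w₀ hw₀
      have h1 := congrArg (lam K n ((tagG n w₀)⁻¹)) hEA
      rw [lam_EA, map_sum] at h1
      simp only [lam_EPhi_mul] at h1
      have hc : (toMA K n f).coeff w₀ ≠ 0 := Finsupp.mem_support_iff.mp hw₀
      have h2 : monoW K w₀
          = ((toMA K n f).coeff w₀)⁻¹ • (((toMA K n f).coeff w₀) • monoW K w₀) := by
        rw [inv_smul_smul₀ hc]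
      rw [h2, h1]
      refine rightIdealSpan.smul_mem _ ?_
      exact ⟨d, g, fun i => lam K n ((tagG n w₀)⁻¹) (EB K n (qB i)), hgF, rfl⟩
    have hsm : ∀ w : FreeMonoid (Fin n),
        ((toMA K n f).coeff w) • monoW K w
          = monoW K w * (algebraMap K (FreeAlgebra K (Fin n)) ((toMA K n f).coeff w)) := by
      intro w
      rw [Algebra.smul_def, Algebra.commutes]
    rw [show f = ∑ w ∈ (toMA K n f).coeff.support, ((toMA K n f).coeff w) • monoW K w from repr_eq K n f]
    refine rightIdealSpan.sum_mem _ fun w hw => ?_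
    rw [hsm w]
    refine rightIdealSpan.mul_mem ?_ _
    exact ⟨⟨w, rfl⟩, key w hw⟩
end

section
/- Let K be a field and X = {x₁,…,xₙ}, and let ⪯ be a monomial ordering on ⟨X⟩. Let I_ρ be a right ideal of K⟨X⟩ with a right generating set G that is right reduced, i.e., every g ∈ G is monic and, for every g ∈ G, no monomial in supp(g) is a right multiple lm(g')·b (b ∈ ⟨X⟩) of lm(g') for any g' ∈ G \ {g}. Then G is a right Gröbner basis of I_ρ: for every nonzero f ∈ I_ρ there exist g ∈ G and b ∈ ⟨X⟩ with lm(f) = lm(g)·b. -/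
open scoped BigOperators

/-- The leading monomial of `f ∈ K⟨X⟩` with respect to a linear order `ord` on the free
monoid of monomials: the `ord`-largest element of the support of `f` (and `1` if `f = 0`).
Here `K⟨X⟩` is realized as the monoid algebra of the free monoid `⟨X⟩`, so that monomials
form its canonical basis. -/
noncomputable def lm {K : Type*} [Field K] {n : ℕ} (ord : LinearOrder (FreeMonoid (Fin n)))
    (f : MonoidAlgebra K (FreeMonoid (Fin n))) : FreeMonoid (Fin n) :=
  if h : f.coeff.support.Nonempty then @Finset.max' _ ord f.coeff.support h else 1

private lemma freeMonoid_factor {α : Type*} {a b c d : FreeMonoid α} (h : a * b = c * d) :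
    (∃ e, c = a * e) ∨ ∃ e, a = c * e := by
  have h' : a.toList ++ b.toList = c.toList ++ d.toList := congrArg FreeMonoid.toList h
  rcases List.append_eq_append_iff.mp h' with ⟨e, he, _⟩ | ⟨e, he, _⟩
  · exact Or.inl ⟨FreeMonoid.ofList e, congrArg FreeMonoid.ofList he⟩
  · exact Or.inr ⟨FreeMonoid.ofList e, congrArg FreeMonoid.ofList he⟩

private lemma key_lemma {K : Type*} [Field K] {n : ℕ}
    (ord : LinearOrder (FreeMonoid (Fin n)))
    (hcomp : ∀ a b m m' : FreeMonoid (Fin n), ord.le m m' → ord.le (a * m * b) (a * m' * b))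
    (G : Set (MonoidAlgebra K (FreeMonoid (Fin n))))
    (hmonic : ∀ g ∈ G, g.coeff (lm ord g) = 1)
    (hred : ∀ g ∈ G, ∀ m ∈ g.coeff.support,
      ¬∃ g' ∈ G, g' ≠ g ∧ ∃ b : FreeMonoid (Fin n), m = lm ord g' * b)
    (S : Finset (MonoidAlgebra K (FreeMonoid (Fin n)))) (hSG : ↑S ⊆ G)
    (Q : MonoidAlgebra K (FreeMonoid (Fin n)) → MonoidAlgebra K (FreeMonoid (Fin n)))
    (hne : (∑ g ∈ S, g * Q g) ≠ 0) :
    ∃ g ∈ G, ∃ b : FreeMonoid (Fin n), lm ord (∑ g ∈ S, g * Q g) = lm ord g * b := by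
  classical
  letI := ord
  set f := ∑ g ∈ S, g * Q g with hf
  -- basic facts about lm
  have hGne : ∀ g ∈ G, g ≠ 0 := by
    intro g hg h0
    have := hmonic g hg
    rw [h0] at this
    simp at this
  have hlm_mem : ∀ g ∈ G, lm ord g ∈ g.coeff.support := by
    intro g hg
    have h : g.coeff.support.Nonempty := Finsupp.support_nonempty_iff.mpr (MonoidAlgebra.coeff_eq_zero.not.mpr (hGne g hg))
    rw [lm, dif_pos h]
    exact Finset.max'_mem _ h
  have hle : ∀ (g : MonoidAlgebra K (FreeMonoid (Fin n))), ∀ u ∈ g.coeff.support,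
      ord.le u (lm ord g) := by
    intro g u hu
    have h : g.coeff.support.Nonempty := ⟨u, hu⟩
    rw [lm, dif_pos h]
    exact Finset.le_max' _ u hu
  -- the set of pairs
  set P : Finset (MonoidAlgebra K (FreeMonoid (Fin n)) × FreeMonoid (Fin n)) :=
    S.biUnion (fun g => (Q g).coeff.support.image (fun m => (g, m))) with hP
  have hmemP : ∀ p : MonoidAlgebra K (FreeMonoid (Fin n)) × FreeMonoid (Fin n),
      p ∈ P ↔ p.1 ∈ S ∧ p.2 ∈ (Q p.1).coeff.support := by
    rintro ⟨g, m⟩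
    simp only [hP, Finset.mem_biUnion, Finset.mem_image, Prod.mk.injEq]
    constructor
    · rintro ⟨g', hg', m', hm', rfl, rfl⟩; exact ⟨hg', hm'⟩
    · rintro ⟨hg, hm⟩; exact ⟨g, hg, m, hm, rfl, rfl⟩
  have hPne : P.Nonempty := by
    rw [Finset.nonempty_iff_ne_empty]
    intro hPe
    apply hne
    apply Finset.sum_eq_zero
    intro g hg
    have : Q g = 0 := by
      by_contra hQ
      obtain ⟨m, hm⟩ := Finsupp.support_nonempty_iff.mpr (MonoidAlgebra.coeff_eq_zero.not.mpr hQ)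
      have : (g, m) ∈ P := (hmemP _).mpr ⟨hg, hm⟩
      rw [hPe] at this; exact absurd this (Finset.notMem_empty _)
    rw [this, mul_zero]
  obtain ⟨p₀, hp₀, hmax⟩ := P.exists_max_image (fun p => lm ord p.1 * p.2) hPne
  obtain ⟨hg₀S, hm₀⟩ := (hmemP p₀).mp hp₀
  set g₀ := p₀.1
  set m₀ := p₀.2
  set M := lm ord g₀ * m₀ with hM
  have hg₀G : g₀ ∈ G := hSG hg₀S
  -- key uniqueness claim
  have claim : ∀ g ∈ S, ∀ u ∈ g.coeff.support, ∀ m ∈ (Q g).coeff.support, u * m = M →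
      g = g₀ ∧ m = m₀ ∧ u = lm ord g := by
    intro g hgS u hu m hm hum
    have hgG : g ∈ G := hSG hgS
    have h1 : lm ord g * m ≤ M := hmax (g, m) ((hmemP _).mpr ⟨hgS, hm⟩)
    have h2 : M ≤ lm ord g * m := by
      have := hcomp 1 m u (lm ord g) (hle g u hu)
      simpa [one_mul, ← hum] using this
    have heq : lm ord g * m = M := le_antisymm h1 h2
    have hgg : g = g₀ := by
      by_contra hne'
      rcases freeMonoid_factor heq with ⟨e, he⟩ | ⟨e, he⟩
      · exact hred g₀ hg₀G (lm ord g₀) (hlm_mem g₀ hg₀G) ⟨g, hgG, hne', e, he⟩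
      · exact hred g hgG (lm ord g) (hlm_mem g hgG) ⟨g₀, hg₀G, Ne.symm hne', e, he⟩
    subst hgg
    have hmm : m = m₀ := mul_left_cancel heq
    subst hmm
    refine ⟨rfl, rfl, ?_⟩
    have h3 : u * m₀ = lm ord g₀ * m₀ := by rw [hum]
    exact mul_right_cancel h3
  -- the coefficient of M in f
  have hcoef : ∀ g ∈ S, (g * Q g).coeff M = if g = g₀ then (Q g₀).coeff m₀ else 0 := by
    intro g hgS
    rw [MonoidAlgebra.coeff_mul]
    simp only [Finsupp.sum]
    by_cases hgg : g = g₀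
    · subst hgg
      rw [if_pos rfl]
      rw [Finset.sum_eq_single (lm ord g₀)]
      · rw [Finset.sum_eq_single m₀]
        · rw [if_pos rfl, hmonic g₀ hg₀G, one_mul]
        · intro m hm hmne
          rw [if_neg]
          intro hum
          exact hmne (claim g₀ hgS _ (hlm_mem g₀ hg₀G) m hm hum).2.1
        · intro h; exact absurd hm₀ h
      · intro u hu hune
        apply Finset.sum_eq_zero
        intro m hm
        rw [if_neg]
        intro hum
        exact hune (claim g₀ hgS u hu m hm hum).2.2
      · intro h; exact absurd (hlm_mem g₀ hg₀G) h
    · rw [if_neg hgg]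
      apply Finset.sum_eq_zero
      intro u hu
      apply Finset.sum_eq_zero
      intro m hm
      rw [if_neg]
      intro hum
      exact hgg (claim g hgS u hu m hm hum).1
  have hfM : f.coeff M = (Q g₀).coeff m₀ := by
    rw [hf, MonoidAlgebra.coeff_sum, Finset.sum_apply']
    rw [Finset.sum_congr rfl hcoef, Finset.sum_ite_eq' S g₀ (fun _ => (Q g₀).coeff m₀),
      if_pos hg₀S]
  have hMne : f.coeff M ≠ 0 := by
    rw [hfM]
    exact Finsupp.mem_support_iff.mp hm₀
  have hMmem : M ∈ f.coeff.support := Finsupp.mem_support_iff.mpr hMne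
  -- all monomials of f are ≤ M
  have hbound : ∀ v ∈ f.coeff.support, v ≤ M := by
    intro v hv
    rw [hf, MonoidAlgebra.coeff_sum] at hv
    obtain ⟨g, hgS, hvg⟩ := Finsupp.mem_support_finset_sum v hv
    have := MonoidAlgebra.support_coeff_mul_subset g (Q g) hvg
    rw [Finset.mem_mul] at this
    obtain ⟨u, hu, m, hm, humv⟩ := this
    calc v = u * m := humv.symm
      _ ≤ lm ord g * m := by
          have := hcomp 1 m u (lm ord g) (hle g u hu)
          simpa [one_mul] using this
      _ ≤ M := hmax (g, m) ((hmemP _).mpr ⟨hgS, hm⟩)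
  have hfsupp : f.coeff.support.Nonempty := ⟨M, hMmem⟩
  refine ⟨g₀, hg₀G, m₀, ?_⟩
  rw [lm, dif_pos hfsupp]
  exact le_antisymm (Finset.max'_le _ _ _ hbound) (Finset.le_max' _ M hMmem)

/-- **Right reduced sets are right Gröbner bases** (Lemma on right Gröbner bases).
Let `⪯` be a monomial ordering on `⟨X⟩` (a linear order that is a well-order and compatible
with multiplication) and let `G` be a right generating set of the right ideal `I_ρ` that is
right reduced: every `g ∈ G` is monic and no monomial in the support of any `g ∈ G` is a
right multiple of `lm(g')` for some `g' ∈ G \ {g}`.  Then `G` is a right Gröbner basis of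
`I_ρ`: the leading monomial of every nonzero `f ∈ I_ρ` is a right multiple of `lm(g)` for
some `g ∈ G`. -/
theorem rightReduced_is_rightGroebnerBasis (K : Type*) [Field K] (n : ℕ)
    (ord : LinearOrder (FreeMonoid (Fin n)))
    (hwo : WellFounded ord.lt)
    (hcomp : ∀ a b m m' : FreeMonoid (Fin n), ord.le m m' → ord.le (a * m * b) (a * m' * b))
    (G : Set (MonoidAlgebra K (FreeMonoid (Fin n))))
    (hmonic : ∀ g ∈ G, g.coeff (lm ord g) = 1)
    (hred : ∀ g ∈ G, ∀ m ∈ g.coeff.support,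
      ¬∃ g' ∈ G, g' ≠ g ∧ ∃ b : FreeMonoid (Fin n), m = lm ord g' * b) :
    ∀ f ∈ rightIdealSpan G, f ≠ 0 →
      ∃ g ∈ G, ∃ b : FreeMonoid (Fin n), lm ord f = lm ord g * b := by
  classical
  rintro f ⟨d, F, q, hF, rfl⟩ hne
  set S : Finset (MonoidAlgebra K (FreeMonoid (Fin n))) := Finset.univ.image F with hS
  set Q : MonoidAlgebra K (FreeMonoid (Fin n)) → MonoidAlgebra K (FreeMonoid (Fin n)) :=
    fun g => ∑ i ∈ Finset.univ.filter (fun i => F i = g), q i with hQ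
  have hrw : ∑ i, F i * q i = ∑ g ∈ S, g * Q g := by
    rw [← Finset.sum_fiberwise_of_maps_to (g := F) (t := S)
      (fun i _ => Finset.mem_image_of_mem F (Finset.mem_univ i)) (fun i => F i * q i)]
    refine Finset.sum_congr rfl fun g hg => ?_
    rw [hQ, Finset.mul_sum]
    refine Finset.sum_congr rfl fun i hi => ?_
    rw [(Finset.mem_filter.mp hi).2]
  rw [hrw]
  rw [hrw] at hne
  exact key_lemma ord hcomp G hmonic hred S
    (fun g hg => by obtain ⟨i, _, rfl⟩ := Finset.mem_image.mp hg; exact hF i) Q hne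
end

section
/- Let K be a field, X = {x₁,…,xₙ}, and ⪯ a monomial ordering on ⟨X⟩. Let I be a nonzero two-sided ideal of K⟨X⟩ such that I, viewed as a right ideal, admits a finite right Gröbner basis G, i.e., G is a finite right generating set of I and for every nonzero f ∈ I there exist g ∈ G and b ∈ ⟨X⟩ with lm(f) = lm(g)·b. Then I is zero-dimensional, i.e., the quotient K⟨X⟩/I is finite-dimensional as a K-vector space. -/
open scoped BigOperators

section Aux

variable {K : Type*} [Field K] {n : ℕ} (ord : LinearOrder (FreeMonoid (Fin n)))

lemma lm_mem {f : MonoidAlgebra K (FreeMonoid (Fin n))} (hf : f ≠ 0) :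
    lm ord f ∈ f.coeff.support := by
  simp only [lm, dif_pos (Finsupp.support_nonempty_iff.2 (mt MonoidAlgebra.coeff_eq_zero.1 hf))]
  exact @Finset.max'_mem _ ord _ _

lemma le_lm {f : MonoidAlgebra K (FreeMonoid (Fin n))} {w : FreeMonoid (Fin n)}
    (hw : w ∈ f.coeff.support) : ord.le w (lm ord f) := by
  have hf : f.coeff.support.Nonempty := ⟨w, hw⟩
  simp only [lm, dif_pos hf]
  exact @Finset.le_max' _ ord _ _ hw

lemma lm_eq_of {f : MonoidAlgebra K (FreeMonoid (Fin n))} {w : FreeMonoid (Fin n)}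
    (hw : w ∈ f.coeff.support) (hmax : ∀ v ∈ f.coeff.support, ord.le v w) : lm ord f = w := by
  letI := ord
  exact le_antisymm ((hmax _ (lm_mem ord (fun h0 => by simp [h0] at hw))))
    (le_lm ord hw)

lemma lm_single (w : FreeMonoid (Fin n)) (c : K) (hc : c ≠ 0) :
    lm ord (MonoidAlgebra.single w c) = w := by
  refine lm_eq_of ord ?_ ?_
  · rw [MonoidAlgebra.coeff_single, Finsupp.support_single_ne_zero _ hc]; exact Finset.mem_singleton_self w
  · intro v hv
    rw [MonoidAlgebra.coeff_single, Finsupp.support_single_ne_zero _ hc, Finset.mem_singleton] at hv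
    exact hv ▸ ord.le_refl w

lemma lm_mul_single
    (hcomp : ∀ a b m m' : FreeMonoid (Fin n), ord.le m m' → ord.le (a * m * b) (a * m' * b))
    {f : MonoidAlgebra K (FreeMonoid (Fin n))} (hf : f ≠ 0) (b : FreeMonoid (Fin n)) :
    f * MonoidAlgebra.single b (1 : K) ≠ 0 ∧
      lm ord (f * MonoidAlgebra.single b (1 : K)) = lm ord f * b := by
  letI := ord
  have hs : (f * MonoidAlgebra.single b (1:K)).coeff.support
      = f.coeff.support.map (mulRightEmbedding b) :=
    MonoidAlgebra.support_coeff_mul_single f 1 (by simp) b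
  have hne : (f * MonoidAlgebra.single b (1:K)).coeff.support.Nonempty := by
    rw [hs]; exact Finset.Nonempty.map (Finsupp.support_nonempty_iff.2 (mt MonoidAlgebra.coeff_eq_zero.1 hf))
  refine ⟨mt MonoidAlgebra.coeff_eq_zero.2 (Finsupp.support_nonempty_iff.1 hne), lm_eq_of ord ?_ ?_⟩
  · rw [hs, Finset.mem_map]
    exact ⟨lm ord f, lm_mem ord hf, mulRightEmbedding_apply b _⟩
  · intro v hv
    rw [hs, Finset.mem_map] at hv
    obtain ⟨a, ha, rfl⟩ := hv
    have := hcomp 1 b a (lm ord f) (le_lm ord ha)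
    simpa [mulRightEmbedding_apply] using this

lemma lm_single_mul
    (hcomp : ∀ a b m m' : FreeMonoid (Fin n), ord.le m m' → ord.le (a * m * b) (a * m' * b))
    {f : MonoidAlgebra K (FreeMonoid (Fin n))} (hf : f ≠ 0) (a : FreeMonoid (Fin n)) :
    MonoidAlgebra.single a (1 : K) * f ≠ 0 ∧
      lm ord (MonoidAlgebra.single a (1 : K) * f) = a * lm ord f := by
  letI := ord
  have hs : (MonoidAlgebra.single a (1:K) * f).coeff.support
      = f.coeff.support.map (mulLeftEmbedding a) :=
    MonoidAlgebra.support_coeff_single_mul f 1 (by simp) a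
  have hne : (MonoidAlgebra.single a (1:K) * f).coeff.support.Nonempty := by
    rw [hs]; exact Finset.Nonempty.map (Finsupp.support_nonempty_iff.2 (mt MonoidAlgebra.coeff_eq_zero.1 hf))
  refine ⟨mt MonoidAlgebra.coeff_eq_zero.2 (Finsupp.support_nonempty_iff.1 hne), lm_eq_of ord ?_ ?_⟩
  · rw [hs, Finset.mem_map]
    exact ⟨lm ord f, lm_mem ord hf, mulLeftEmbedding_apply a _⟩
  · intro v hv
    rw [hs, Finset.mem_map] at hv
    obtain ⟨x, hx, rfl⟩ := hv
    have := hcomp a 1 x (lm ord f) (le_lm ord hx)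
    simpa [mulLeftEmbedding_apply] using this

lemma lm_sub_lt {f p : MonoidAlgebra K (FreeMonoid (Fin n))} (hf : f ≠ 0) (hp : p ≠ 0)
    (h : lm ord p = lm ord f) :
    f - (f.coeff (lm ord f) / p.coeff (lm ord f)) • p = 0 ∨
      ((f - (f.coeff (lm ord f) / p.coeff (lm ord f)) • p) ≠ 0 ∧
        ord.lt (lm ord (f - (f.coeff (lm ord f) / p.coeff (lm ord f)) • p)) (lm ord f)) := by
  classical
  letI := ord
  set c := f.coeff (lm ord f) / p.coeff (lm ord f) with hc
  set q := f - c • p with hq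
  have hptop : p.coeff (lm ord f) ≠ 0 := by
    have := Finsupp.mem_support_iff.1 (lm_mem ord hp)
    rwa [h] at this
  have hqtop : q.coeff (lm ord f) = 0 := by
    rw [hq, hc, MonoidAlgebra.coeff_sub, Finsupp.sub_apply, MonoidAlgebra.coeff_smul, Finsupp.smul_apply, smul_eq_mul,
      div_mul_cancel₀ _ hptop, sub_self]
  have hsupp : ∀ v ∈ q.coeff.support, ord.lt v (lm ord f) := by
    intro v hv
    have hvne : v ≠ lm ord f := by
      rintro rfl; exact (Finsupp.mem_support_iff.1 hv) hqtop
    have hv' : v ∈ f.coeff.support ∪ (c • p).coeff.support := by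
      rw [hq, MonoidAlgebra.coeff_sub] at hv; exact Finsupp.support_sub hv
    have hle : v ≤ lm ord f := by
      rcases Finset.mem_union.1 hv' with h1 | h1
      · exact le_lm ord h1
      · have h1' : v ∈ (c • p.coeff).support := by rwa [MonoidAlgebra.coeff_smul] at h1
        have := le_lm ord (Finsupp.support_smul h1')
        rwa [h] at this
    exact lt_of_le_of_ne hle hvne
  by_cases hq0 : q = 0
  · exact Or.inl hq0
  · exact Or.inr ⟨hq0, hsupp _ (lm_mem ord hq0)⟩

lemma prefix_of_mul_eq_mul {m u w b : FreeMonoid (Fin n)} (h : m * u = w * b)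
    (hlen : w.length ≤ m.length) : ∃ b', m = w * b' := by
  have h1 : FreeMonoid.toList w <+: FreeMonoid.toList m := by
    apply List.prefix_of_prefix_length_le (l₃ := FreeMonoid.toList (m * u))
    · rw [h, FreeMonoid.toList_mul]; exact List.prefix_append _ _
    · rw [FreeMonoid.toList_mul]; exact List.prefix_append _ _
    · exact hlen
  obtain ⟨t, ht⟩ := h1
  refine ⟨FreeMonoid.ofList t, ?_⟩
  apply FreeMonoid.toList.injective
  rw [FreeMonoid.toList_mul, FreeMonoid.toList_ofList, ht]

lemma comparable_of_mul_eq_mul {w t w' t' : FreeMonoid (Fin n)} (h : w * t = w' * t') :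
    (∃ d, w' = w * d) ∨ (∃ d, w = w' * d) := by
  rcases le_total w.length w'.length with hl | hl
  · exact Or.inl (prefix_of_mul_eq_mul h.symm hl)
  · exact Or.inr (prefix_of_mul_eq_mul h hl)

lemma gb_lemma
    (hcomp : ∀ a b m m' : FreeMonoid (Fin n), ord.le m m' → ord.le (a * m * b) (a * m' * b))
    (S : Finset (FreeMonoid (Fin n)))
    (hinc : ∀ w ∈ S, ∀ w' ∈ S, (∃ b, w' = w * b) → w = w')
    (h Q : FreeMonoid (Fin n) → MonoidAlgebra K (FreeMonoid (Fin n)))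
    (hh0 : ∀ w ∈ S, h w ≠ 0) (hhlm : ∀ w ∈ S, lm ord (h w) = w)
    (hne : (∑ w ∈ S, h w * Q w) ≠ 0) :
    ∃ w ∈ S, ∃ b, lm ord (∑ w ∈ S, h w * Q w) = w * b := by
  classical
  letI := ord
  set f := ∑ w ∈ S, h w * Q w with hf
  set D := S.biUnion (fun w => (Q w).coeff.support.image (fun t => w * t)) with hD
  have hDne : D.Nonempty := by
    by_contra hDe
    apply hne
    refine Finset.sum_eq_zero ?_
    intro w hw
    have hQw : Q w = 0 := by
      by_contra hQw
      obtain ⟨t, ht⟩ := Finsupp.support_nonempty_iff.2 (mt MonoidAlgebra.coeff_eq_zero.1 hQw)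
      exact hDe ⟨w * t, Finset.mem_biUnion.2 ⟨w, hw, Finset.mem_image.2 ⟨t, ht, rfl⟩⟩⟩
    rw [hQw, mul_zero]
  obtain ⟨Mx, hMxD, hMxmax⟩ : ∃ Mx ∈ D, ∀ v ∈ D, ord.le v Mx :=
    ⟨D.max' hDne, D.max'_mem hDne, fun v hv => D.le_max' v hv⟩
  rw [hD, Finset.mem_biUnion] at hMxD
  obtain ⟨w₀, hw₀S, hMxD⟩ := hMxD
  obtain ⟨t₀, ht₀, hM0⟩ := Finset.mem_image.1 hMxD
  have hub : ∀ w ∈ S, ∀ t ∈ (Q w).coeff.support, ord.le (w * t) Mx := by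
    intro w hw t ht
    exact hMxmax _ (by rw [hD]; exact Finset.mem_biUnion.2 ⟨w, hw, Finset.mem_image.2 ⟨t, ht, rfl⟩⟩)
  have hw₀mem : w₀ ∈ (h w₀).coeff.support := by
    have := lm_mem ord (hh0 w₀ hw₀S); rwa [hhlm w₀ hw₀S] at this
  have claim1 : ∀ w ∈ S, ∀ a₁ ∈ (h w).coeff.support, ∀ a₂ ∈ (Q w).coeff.support, a₁ * a₂ = Mx →
      a₁ = w ∧ w * a₂ = Mx := by
    intro w hw a₁ ha₁ a₂ ha₂ heq
    have h1 : ord.le a₁ w := by have := le_lm ord ha₁; rwa [hhlm w hw] at this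
    have h2 : ord.le (a₁ * a₂) (w * a₂) := by simpa using hcomp 1 a₂ a₁ w h1
    have h4 : w * a₂ = Mx := le_antisymm (hub w hw a₂ ha₂) (heq ▸ h2)
    exact ⟨mul_right_cancel (heq.trans h4.symm), h4⟩
  have claim2 : ∀ w ∈ S, ∀ a₂, w * a₂ = Mx → w = w₀ := by
    intro w hw a₂ heq
    rcases comparable_of_mul_eq_mul (heq.trans hM0.symm) with ⟨d, hd⟩ | ⟨d, hd⟩
    · exact hinc w hw w₀ hw₀S ⟨d, hd⟩
    · exact (hinc w₀ hw₀S w hw ⟨d, hd⟩).symm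
  have hterm : ∀ w ∈ S, (h w * Q w).coeff Mx = if w = w₀ then (h w₀).coeff w₀ * (Q w₀).coeff t₀ else 0 := by
    intro w hw
    rw [MonoidAlgebra.coeff_mul]
    simp only [Finsupp.sum]
    by_cases hww : w = w₀
    · subst hww
      rw [if_pos rfl]
      rw [Finset.sum_eq_single_of_mem w hw₀mem ?_]
      · rw [Finset.sum_eq_single_of_mem t₀ ht₀ ?_]
        · rw [if_pos hM0]
        · intro a₂ ha₂ ha₂ne
          refine if_neg ?_
          intro hcon
          exact ha₂ne (mul_left_cancel (hcon.trans hM0.symm))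
      · intro a₁ ha₁ ha₁ne
        refine Finset.sum_eq_zero ?_
        intro a₂ ha₂
        by_cases hc : a₁ * a₂ = Mx
        · exact absurd (claim1 w hw a₁ ha₁ a₂ ha₂ hc).1 ha₁ne
        · exact if_neg hc
    · rw [if_neg hww]
      refine Finset.sum_eq_zero ?_
      intro a₁ ha₁
      refine Finset.sum_eq_zero ?_
      intro a₂ ha₂
      by_cases hc : a₁ * a₂ = Mx
      · exact absurd (claim2 w hw a₂ (claim1 w hw a₁ ha₁ a₂ ha₂ hc).2) hww
      · exact if_neg hc
  have hfMx : f.coeff Mx = (h w₀).coeff w₀ * (Q w₀).coeff t₀ := by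
    rw [hf, MonoidAlgebra.coeff_sum, Finsupp.finset_sum_apply, Finset.sum_congr rfl hterm,
      Finset.sum_ite_eq' S w₀ (fun _ => (h w₀).coeff w₀ * (Q w₀).coeff t₀), if_pos hw₀S]
  have hfMxne : f.coeff Mx ≠ 0 := by
    rw [hfMx]
    exact mul_ne_zero (Finsupp.mem_support_iff.1 hw₀mem) (Finsupp.mem_support_iff.1 ht₀)
  have hMxmem : Mx ∈ f.coeff.support := Finsupp.mem_support_iff.2 hfMxne
  have hsup : ∀ v ∈ f.coeff.support, ord.le v Mx := by
    intro v hv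
    rw [hf, MonoidAlgebra.coeff_sum] at hv
    have hv1 := Finsupp.support_finset_sum hv
    obtain ⟨w, hw, hv2⟩ := Finset.mem_biUnion.1 hv1
    have hv3 := MonoidAlgebra.support_coeff_mul_subset _ _ hv2
    obtain ⟨a₁, ha₁, a₂, ha₂, rfl⟩ := Finset.mem_mul.1 hv3
    have h1 : ord.le a₁ w := by have := le_lm ord ha₁; rwa [hhlm w hw] at this
    have h2 : ord.le (a₁ * a₂) (w * a₂) := by simpa using hcomp 1 a₂ a₁ w h1
    exact le_trans h2 (hub w hw a₂ ha₂)
  exact ⟨w₀, hw₀S, t₀, (lm_eq_of ord hMxmem hsup).trans hM0.symm⟩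

/-- The set of leading monomials of the nonzero elements of `I`. -/
def LMSet (I : Submodule K (MonoidAlgebra K (FreeMonoid (Fin n)))) :
    Set (FreeMonoid (Fin n)) :=
  {m | ∃ p, p ∈ I ∧ p ≠ 0 ∧ lm ord p = m}

/-- The prefix-minimal leading monomials of `I`. -/
def PMin (I : Submodule K (MonoidAlgebra K (FreeMonoid (Fin n)))) :
    Set (FreeMonoid (Fin n)) :=
  {m | m ∈ LMSet ord I ∧ ∀ u b, m = u * b → b ≠ 1 → u ∉ LMSet ord I}

/-- A choice of an element of `I` with prescribed leading monomial. -/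
noncomputable def pick (I : Submodule K (MonoidAlgebra K (FreeMonoid (Fin n))))
    (m : FreeMonoid (Fin n)) : MonoidAlgebra K (FreeMonoid (Fin n)) :=
  letI := Classical.dec (∃ p, p ∈ I ∧ p ≠ 0 ∧ lm ord p = m)
  if hm : ∃ p, p ∈ I ∧ p ≠ 0 ∧ lm ord p = m then hm.choose else 0

lemma pick_spec (I : Submodule K (MonoidAlgebra K (FreeMonoid (Fin n))))
    {m : FreeMonoid (Fin n)} (hm : m ∈ LMSet ord I) :
    pick ord I m ∈ I ∧ pick ord I m ≠ 0 ∧ lm ord (pick ord I m) = m := by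
  have hm' : ∃ p, p ∈ I ∧ p ≠ 0 ∧ lm ord p = m := hm
  rw [pick, dif_pos hm']
  exact hm'.choose_spec

lemma pmin_incomp (I : Submodule K (MonoidAlgebra K (FreeMonoid (Fin n)))) :
    ∀ w ∈ PMin ord I, ∀ w' ∈ PMin ord I, (∃ b, w' = w * b) → w = w' := by
  rintro w hw w' hw' ⟨b, hb⟩
  by_cases hb1 : b = 1
  · rw [hb, hb1, mul_one]
  · exact absurd hw.1 (hw'.2 w b hb hb1)

lemma exists_pmin_prefix (I : Submodule K (MonoidAlgebra K (FreeMonoid (Fin n))))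
    {m : FreeMonoid (Fin n)} (hm : m ∈ LMSet ord I) :
    ∃ u b, u ∈ PMin ord I ∧ m = u * b := by
  classical
  have hJ : ∃ j, ∃ u b, m = u * b ∧ u ∈ LMSet ord I ∧ u.length = j :=
    ⟨m.length, m, 1, (mul_one m).symm, hm, rfl⟩
  obtain ⟨u, b, hub, huLM, hlen⟩ := Nat.find_spec hJ
  refine ⟨u, b, ⟨huLM, ?_⟩, hub⟩
  intro u' b' hub' hb' hu'
  have h1 : u.length = u'.length + b'.length := by rw [hub', FreeMonoid.length_mul]
  have hb'pos : b'.length ≠ 0 := fun h0 => hb' (FreeMonoid.length_eq_zero.1 h0)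
  have hlt : u'.length < Nat.find hJ := by omega
  exact Nat.find_min hJ hlt ⟨u', b' * b, by rw [hub, hub', mul_assoc], hu', rfl⟩

lemma phase1
    (hwo : WellFounded ord.lt)
    (hcomp : ∀ a b m m' : FreeMonoid (Fin n), ord.le m m' → ord.le (a * m * b) (a * m' * b))
    (I : Submodule K (MonoidAlgebra K (FreeMonoid (Fin n))))
    (hR : ∀ a x : MonoidAlgebra K (FreeMonoid (Fin n)), x ∈ I → x * a ∈ I) :
    ∀ f ∈ I, ∃ B : Finset (FreeMonoid (Fin n)), ↑B ⊆ PMin ord I ∧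
      ∃ Q : FreeMonoid (Fin n) → MonoidAlgebra K (FreeMonoid (Fin n)),
        f = ∑ w ∈ B, pick ord I w * Q w := by
  classical
  letI := ord
  have main : ∀ m : FreeMonoid (Fin n), ∀ f, f ∈ I → f ≠ 0 → lm ord f = m →
      ∃ B : Finset (FreeMonoid (Fin n)), ↑B ⊆ PMin ord I ∧
        ∃ Q : FreeMonoid (Fin n) → MonoidAlgebra K (FreeMonoid (Fin n)),
          f = ∑ w ∈ B, pick ord I w * Q w := by
    intro m
    refine hwo.induction
      (C := fun m => ∀ f, f ∈ I → f ≠ 0 → lm ord f = m →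
        ∃ B : Finset (FreeMonoid (Fin n)), ↑B ⊆ PMin ord I ∧
          ∃ Q : FreeMonoid (Fin n) → MonoidAlgebra K (FreeMonoid (Fin n)),
            f = ∑ w ∈ B, pick ord I w * Q w) m ?_
    intro m ih f hfI hf0 hlm
    subst hlm
    have hmLM : lm ord f ∈ LMSet ord I := ⟨f, hfI, hf0, rfl⟩
    obtain ⟨u, b, huP, hub⟩ := exists_pmin_prefix ord I hmLM
    obtain ⟨huI, hu0, hulm⟩ := pick_spec ord I huP.1
    obtain ⟨hg0, hglm⟩ := lm_mul_single ord hcomp hu0 b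
    have hgI : pick ord I u * MonoidAlgebra.single b (1:K) ∈ I := hR _ _ huI
    set g := pick ord I u * MonoidAlgebra.single b (1:K) with hgdef
    have hglm' : lm ord g = lm ord f := by
      rw [hglm, hulm, ← hub]
    set c := f.coeff (lm ord f) / g.coeff (lm ord f) with hcdef
    have hscomb : c • g = pick ord I u * (c • MonoidAlgebra.single b (1:K)) := by
      rw [hgdef, mul_smul_comm]
    rcases lm_sub_lt ord hf0 hg0 hglm' with hzero | ⟨hne, hlt⟩
    · refine ⟨{u}, by simpa using huP, fun _ => c • MonoidAlgebra.single b (1:K), ?_⟩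
      rw [Finset.sum_singleton, ← hscomb]
      exact sub_eq_zero.1 hzero
    · have hf'I : f - c • g ∈ I := I.sub_mem hfI (I.smul_mem c hgI)
      obtain ⟨B', hB'P, Q', hfQ'⟩ := ih _ hlt _ hf'I hne rfl
      refine ⟨insert u B', ?_, fun w => (if w ∈ B' then Q' w else 0) +
          (if w = u then c • MonoidAlgebra.single b (1:K) else 0), ?_⟩
      · intro w hw
        simp only [Finset.coe_insert, Set.mem_insert_iff] at hw
        rcases hw with rfl | hw'
        · exact huP
        · exact hB'P hw'
      · have hsplit : f = (f - c • g) + c • g := by abel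
        rw [hsplit, hfQ']
        simp only [mul_add]
        rw [Finset.sum_add_distrib]
        congr 1
        · have hcong : ∀ w ∈ insert u B',
              pick ord I w * (if w ∈ B' then Q' w else 0)
                = if w ∈ B' then pick ord I w * Q' w else 0 := by
            intro w _; split <;> simp
          rw [Finset.sum_congr rfl hcong, Finset.sum_ite_mem,
            Finset.inter_eq_right.2 (Finset.subset_insert u B')]
        · have hcong : ∀ w ∈ insert u B',
              pick ord I w * (if w = u then c • MonoidAlgebra.single b (1:K) else 0)
                = if w = u then pick ord I w * (c • MonoidAlgebra.single b (1:K)) else 0 := by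
            intro w _; split <;> simp
          rw [Finset.sum_congr rfl hcong, Finset.sum_ite_eq' (insert u B') u,
            if_pos (Finset.mem_insert_self u B'), ← hscomb]
  intro f hfI
  by_cases hf0 : f = 0
  · exact ⟨∅, by simp, fun _ => 0, by simp [hf0]⟩
  · exact main (lm ord f) f hfI hf0 rfl

end Aux

/-- **A nonzero two-sided ideal with a finite right Gröbner basis is zero-dimensional.**
Here a two-sided ideal of `K⟨X⟩` is encoded as a `K`-submodule `I` closed under
multiplication by arbitrary ring elements on both sides.  If `I ≠ {0}` admits a finite
right generating set `G` such that the leading monomial of every nonzero `f ∈ I` is a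
right multiple of `lm(g)` for some `g ∈ G`, then the quotient `K⟨X⟩/I` is
finite-dimensional as a `K`-vector space. -/
theorem finite_rightGroebnerBasis_zeroDimensional (K : Type*) [Field K] (n : ℕ)
    (ord : LinearOrder (FreeMonoid (Fin n)))
    (hwo : WellFounded ord.lt)
    (hcomp : ∀ a b m m' : FreeMonoid (Fin n), ord.le m m' → ord.le (a * m * b) (a * m' * b))
    (I : Submodule K (MonoidAlgebra K (FreeMonoid (Fin n))))
    (hL : ∀ a x : MonoidAlgebra K (FreeMonoid (Fin n)), x ∈ I → a * x ∈ I)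
    (hR : ∀ a x : MonoidAlgebra K (FreeMonoid (Fin n)), x ∈ I → x * a ∈ I)
    (hI : I ≠ ⊥)
    (G : Finset (MonoidAlgebra K (FreeMonoid (Fin n))))
    (hgen : (I : Set (MonoidAlgebra K (FreeMonoid (Fin n)))) =
      rightIdealSpan (G : Set (MonoidAlgebra K (FreeMonoid (Fin n)))))
    (hGB : ∀ f ∈ I, f ≠ 0 → ∃ g ∈ G, ∃ b : FreeMonoid (Fin n), lm ord f = lm ord g * b) :
    FiniteDimensional K (MonoidAlgebra K (FreeMonoid (Fin n)) ⧸ I) := by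
  classical
  letI : LinearOrder (FreeMonoid (Fin n)) := ord
  obtain ⟨f₀, hf₀I, hf₀0⟩ := (Submodule.ne_bot_iff I).1 hI
  have hGI : ∀ g ∈ G, g ∈ I := by
    intro g hg
    have h1 : ∃ (d : ℕ) (fs qs : Fin d → MonoidAlgebra K (FreeMonoid (Fin n))),
        (∀ i, fs i ∈ (G : Set (MonoidAlgebra K (FreeMonoid (Fin n))))) ∧
          g = ∑ i, fs i * qs i :=
      ⟨1, fun _ => g, fun _ => 1, fun _ => hg, by simp⟩
    show g ∈ (I : Set (MonoidAlgebra K (FreeMonoid (Fin n))))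
    rw [hgen]
    exact h1
  have hph1 := phase1 ord hwo hcomp I hR
  choose Bg hBgP Qg hQg using fun g : {x // x ∈ G} => hph1 g (hGI g g.2)
  set P₀ : Finset (FreeMonoid (Fin n)) := G.attach.biUnion Bg with hP₀def
  have hP₀P : ∀ w ∈ P₀, w ∈ PMin ord I := by
    intro w hw
    obtain ⟨g, hg, hw'⟩ := Finset.mem_biUnion.1 hw
    exact hBgP g (Finset.mem_coe.2 hw')
  have rep_mono : ∀ B : Finset (FreeMonoid (Fin n)), B ⊆ P₀ →
      ∀ x : MonoidAlgebra K (FreeMonoid (Fin n)),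
      (∃ Q : FreeMonoid (Fin n) → MonoidAlgebra K (FreeMonoid (Fin n)),
        x = ∑ w ∈ B, pick ord I w * Q w) →
      (∃ Q : FreeMonoid (Fin n) → MonoidAlgebra K (FreeMonoid (Fin n)),
        x = ∑ w ∈ P₀, pick ord I w * Q w) := by
    rintro B hB x ⟨Q, hQ⟩
    refine ⟨fun w => if w ∈ B then Q w else 0, ?_⟩
    have hcong : ∀ w ∈ P₀, pick ord I w * (if w ∈ B then Q w else 0)
        = if w ∈ B then pick ord I w * Q w else 0 := by
      intro w _; split <;> simp
    rw [Finset.sum_congr rfl hcong, Finset.sum_ite_mem, Finset.inter_eq_right.2 hB]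
    exact hQ
  have rep_add : ∀ x y : MonoidAlgebra K (FreeMonoid (Fin n)),
      (∃ Q : FreeMonoid (Fin n) → MonoidAlgebra K (FreeMonoid (Fin n)),
        x = ∑ w ∈ P₀, pick ord I w * Q w) →
      (∃ Q : FreeMonoid (Fin n) → MonoidAlgebra K (FreeMonoid (Fin n)),
        y = ∑ w ∈ P₀, pick ord I w * Q w) →
      (∃ Q : FreeMonoid (Fin n) → MonoidAlgebra K (FreeMonoid (Fin n)),
        x + y = ∑ w ∈ P₀, pick ord I w * Q w) := by
    rintro x y ⟨Q₁, h₁⟩ ⟨Q₂, h₂⟩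
    refine ⟨fun w => Q₁ w + Q₂ w, ?_⟩
    simp only [mul_add]
    rw [Finset.sum_add_distrib, ← h₁, ← h₂]
  have rep_mul : ∀ x q : MonoidAlgebra K (FreeMonoid (Fin n)),
      (∃ Q : FreeMonoid (Fin n) → MonoidAlgebra K (FreeMonoid (Fin n)),
        x = ∑ w ∈ P₀, pick ord I w * Q w) →
      (∃ Q : FreeMonoid (Fin n) → MonoidAlgebra K (FreeMonoid (Fin n)),
        x * q = ∑ w ∈ P₀, pick ord I w * Q w) := by
    rintro x q ⟨Q, hQ⟩
    refine ⟨fun w => Q w * q, ?_⟩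
    rw [hQ, Finset.sum_mul]
    simp only [mul_assoc]
  have hrep : ∀ f : MonoidAlgebra K (FreeMonoid (Fin n)), f ∈ I →
      ∃ Q : FreeMonoid (Fin n) → MonoidAlgebra K (FreeMonoid (Fin n)),
        f = ∑ w ∈ P₀, pick ord I w * Q w := by
    intro f hf
    have hf' : f ∈ rightIdealSpan (G : Set (MonoidAlgebra K (FreeMonoid (Fin n)))) := by
      rw [← hgen]; exact hf
    obtain ⟨d, fs, qs, hfs, rfl⟩ := hf'
    refine Finset.sum_induction _
      (fun x => ∃ Q : FreeMonoid (Fin n) → MonoidAlgebra K (FreeMonoid (Fin n)),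
        x = ∑ w ∈ P₀, pick ord I w * Q w) rep_add ⟨fun _ => 0, by simp⟩ ?_
    intro i _
    refine rep_mul _ _ ?_
    refine rep_mono (Bg ⟨fs i, hfs i⟩) ?_ _ ⟨Qg ⟨fs i, hfs i⟩, hQg ⟨fs i, hfs i⟩⟩
    intro w hw
    exact Finset.mem_biUnion.2 ⟨⟨fs i, hfs i⟩, Finset.mem_attach _ _, hw⟩
  set ℓ : ℕ := P₀.sup FreeMonoid.length with hldef
  have step4 : ∀ m : FreeMonoid (Fin n), ℓ ≤ m.length →
      ∃ p, p ∈ I ∧ p ≠ 0 ∧ lm ord p = m := by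
    intro m hlen
    obtain ⟨hp₁0, hp₁lm⟩ := lm_single_mul ord hcomp hf₀0 m
    have hp₁I : MonoidAlgebra.single m (1:K) * f₀ ∈ I := hL _ _ hf₀I
    obtain ⟨Q, hQ⟩ := hrep _ hp₁I
    have hne : (∑ w ∈ P₀, pick ord I w * Q w) ≠ 0 := by rw [← hQ]; exact hp₁0
    obtain ⟨w, hwP₀, b, hlmeq⟩ := gb_lemma ord hcomp P₀
      (fun w hw w' hw' hb => pmin_incomp ord I w (hP₀P w hw) w' (hP₀P w' hw') hb)
      (pick ord I) Q
      (fun w hw => (pick_spec ord I (hP₀P w hw).1).2.1)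
      (fun w hw => (pick_spec ord I (hP₀P w hw).1).2.2)
      hne
    have hmb : m * lm ord f₀ = w * b := by
      rw [← hp₁lm, hQ]; exact hlmeq
    have hwlen : w.length ≤ m.length :=
      le_trans (Finset.le_sup (f := FreeMonoid.length) hwP₀) hlen
    obtain ⟨b', rfl⟩ := prefix_of_mul_eq_mul hmb hwlen
    obtain ⟨hwI, hw0, hwlm⟩ := pick_spec ord I (hP₀P w hwP₀).1
    obtain ⟨hp0, hplm⟩ := lm_mul_single ord hcomp hw0 b'
    exact ⟨pick ord I w * MonoidAlgebra.single b' 1, hR _ _ hwI, hp0, by rw [hplm, hwlm]⟩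
  have hfinB : {m : FreeMonoid (Fin n) | m.length ≤ ℓ}.Finite := by
    have h1 : {l : List (Fin n) | l.length ≤ ℓ}.Finite := List.finite_length_le _ _
    have h2 : {m : FreeMonoid (Fin n) | m.length ≤ ℓ}
        = FreeMonoid.toList ⁻¹' {l : List (Fin n) | l.length ≤ ℓ} := rfl
    rw [h2]
    exact h1.preimage (FreeMonoid.toList.injective.injOn)
  set Bfin : Finset (FreeMonoid (Fin n)) := hfinB.toFinset with hBfin
  set V : Submodule K (MonoidAlgebra K (FreeMonoid (Fin n))) :=
    Submodule.span K
      ((Bfin.image (fun m => MonoidAlgebra.single m (1:K))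
        : Finset (MonoidAlgebra K (FreeMonoid (Fin n)))) : Set _) with hVdef
  have red : ∀ m : FreeMonoid (Fin n),
      ∀ f : MonoidAlgebra K (FreeMonoid (Fin n)), f ≠ 0 → lm ord f = m →
        ∃ v ∈ V, f - v ∈ I := by
    intro m
    refine hwo.induction
      (C := fun m => ∀ f : MonoidAlgebra K (FreeMonoid (Fin n)), f ≠ 0 → lm ord f = m →
        ∃ v ∈ V, f - v ∈ I) m ?_
    intro m ih f hf0 hlm
    subst hlm
    rcases le_or_gt ℓ (lm ord f).length with hlen | hlen
    · obtain ⟨p, hpI, hp0, hplm⟩ := step4 _ hlen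
      set c := f.coeff (lm ord f) / p.coeff (lm ord f) with hcdef
      rcases lm_sub_lt ord hf0 hp0 hplm with hzero | ⟨hne, hlt⟩
      · refine ⟨0, V.zero_mem, ?_⟩
        rw [sub_zero, sub_eq_zero.1 hzero]
        exact I.smul_mem c hpI
      · obtain ⟨v, hvV, hvI⟩ := ih _ hlt _ hne rfl
        refine ⟨v, hvV, ?_⟩
        have heq : f - v = (f - c • p - v) + c • p := by abel
        rw [heq]
        exact I.add_mem hvI (I.smul_mem c hpI)
    · have hmB : lm ord f ∈ Bfin := by
        rw [hBfin, Set.Finite.mem_toFinset]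
        exact le_of_lt hlen
      have hp0 : MonoidAlgebra.single (lm ord f) (1:K) ≠ 0 :=
        fun hcon => one_ne_zero (MonoidAlgebra.single_eq_zero.1 hcon)
      have hplm : lm ord (MonoidAlgebra.single (lm ord f) (1:K)) = lm ord f :=
        lm_single ord _ _ one_ne_zero
      set p := MonoidAlgebra.single (lm ord f) (1:K) with hpdef
      set c := f.coeff (lm ord f) / p.coeff (lm ord f) with hcdef
      have hpV : p ∈ V := by
        rw [hVdef]
        apply Submodule.subset_span
        rw [Finset.coe_image]
        exact ⟨lm ord f, hmB, rfl⟩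
      rcases lm_sub_lt ord hf0 hp0 hplm with hzero | ⟨hne, hlt⟩
      · refine ⟨c • p, V.smul_mem c hpV, ?_⟩
        rw [hzero]
        exact I.zero_mem
      · obtain ⟨v, hvV, hvI⟩ := ih _ hlt _ hne rfl
        refine ⟨v + c • p, V.add_mem hvV (V.smul_mem c hpV), ?_⟩
        have heq : f - (v + c • p) = (f - c • p) - v := by abel
        rw [heq]
        exact hvI
  have red0 : ∀ f : MonoidAlgebra K (FreeMonoid (Fin n)), ∃ v ∈ V, f - v ∈ I := by
    intro f
    by_cases hf0 : f = 0
    · exact ⟨0, V.zero_mem, by rw [hf0, sub_zero]; exact I.zero_mem⟩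
    · exact red (lm ord f) f hf0 rfl
  refine Module.finite_def.2 ?_
  refine ⟨(Bfin.image (fun m => MonoidAlgebra.single m (1:K))).image I.mkQ, ?_⟩
  rw [Submodule.eq_top_iff']
  intro x
  obtain ⟨f, rfl⟩ := I.mkQ_surjective x
  obtain ⟨v, hvV, hfv⟩ := red0 f
  have heq : I.mkQ f = I.mkQ v := by
    rw [Submodule.mkQ_apply, Submodule.mkQ_apply, Submodule.Quotient.eq]
    exact hfv
  rw [heq]
  have h3 : I.mkQ v ∈ Submodule.map I.mkQ V := Submodule.mem_map_of_mem hvV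
  rw [hVdef, Submodule.map_span] at h3
  rw [Finset.coe_image]
  exact h3
end

section
/- Let R be a ring, (N,·) a monoid with identity 1, and (S_α)_{α∈N} a family of additive subgroups of R whose internal direct sum is R. Let S ⊆ R be such that every element of S lies in some S_α and no two distinct elements of S lie in the same S_α. Assume S_1·S_α ⊆ S_α for all α ∈ N, and let I_ρ be the right ideal of R generated by a subset of S_1. If r = c₁s₁ + ⋯ + c_d s_d ∈ I_ρ with s₁,…,s_d ∈ S pairwise distinct and c₁,…,c_d ∈ S_1, then c_i s_i ∈ I_ρ for every i = 1,…,d. -/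
open scoped BigOperators DirectSum

/-- **Separating pseudogradings separate the terms of elements of s-homogeneous right
ideals.**  Let `R` be a ring, `(N,·)` a monoid and `(S_α)_{α∈N}` a family of additive
subgroups whose internal direct sum is `R`.  Let `Sset ⊆ R` be such that every element of
`Sset` lies in some `S_α` and no two distinct elements of `Sset` lie in the same `S_α`
(separating pseudograding), and assume `S_1 · S_α ⊆ S_α` for all `α`.  Let `I_ρ` be the
right ideal generated by a subset `F ⊆ S_1`.  If `r = c₁s₁ + ⋯ + c_d s_d ∈ I_ρ` with the
`sᵢ ∈ Sset` pairwise distinct and the `cᵢ ∈ S_1`, then `cᵢsᵢ ∈ I_ρ` for every `i`. -/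
theorem sHomogeneous_rightIdeal_separates {R : Type*} [Ring R] {N : Type*} [Monoid N]
    [DecidableEq N]
    (S : N → AddSubgroup R)
    (hinternal : DirectSum.IsInternal S)
    (Sset : Set R)
    (hmem : ∀ s ∈ Sset, ∃ α : N, s ∈ S α)
    (hsep : ∀ s ∈ Sset, ∀ s' ∈ Sset, ∀ α : N, s ∈ S α → s' ∈ S α → s = s')
    (hmul : ∀ α : N, ∀ a ∈ S 1, ∀ b ∈ S α, a * b ∈ S α)
    (F : Set R) (hF : F ⊆ S 1)
    (d : ℕ) (c s : Fin d → R)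
    (hs : ∀ i, s i ∈ Sset)
    (hdist : ∀ i j, i ≠ j → s i ≠ s j)
    (hc : ∀ i, c i ∈ S 1)
    (hr : (∑ i, c i * s i) ∈ rightIdealSpan F) :
    ∀ i, c i * s i ∈ rightIdealSpan F := by
  classical
  set e : (⨁ i, S i) ≃+ R := AddEquiv.ofBijective (DirectSum.coeAddMonoidHom S) hinternal
    with he_def
  have he_apply : ∀ y, e y = DirectSum.coeAddMonoidHom S y := fun _ => rfl
  -- the projection onto the α component, as an AddMonoidHom R →+ R
  set P : N → R →+ R := fun α =>
    ((S α).subtype.comp ((DFinsupp.evalAddMonoidHom α).comp e.symm.toAddMonoidHom))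
    with hP_def
  have hP_apply : ∀ α x, P α x = ((e.symm x) α : R) := fun _ _ => rfl
  -- the key computation for homogeneous elements
  have hP_hom : ∀ (α β : N) (x : R), x ∈ S β → P α x = if α = β then x else 0 := by
    intro α β x hx
    have hsymm : e.symm x = DirectSum.of (fun i => (S i : AddSubgroup R)) β ⟨x, hx⟩ := by
      rw [AddEquiv.symm_apply_eq, he_apply, DirectSum.coeAddMonoidHom_of]
    rw [hP_apply, hsymm]
    by_cases h : α = β
    · subst h; simp [DirectSum.of_eq_same]
    · rw [DirectSum.of_eq_of_ne _ _ _ h]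
      simp [h]
  -- P α (f * q) = f * P α q for f ∈ S 1
  have hP_mul : ∀ (α : N) (f : R), f ∈ S 1 → ∀ q : R, P α (f * q) = f * P α q := by
    intro α f hf q
    have hq : q = e (e.symm q) := (e.apply_symm_apply q).symm
    rw [hq]
    generalize e.symm q = y
    induction y using DirectSum.induction_on with
    | zero => simp
    | of β b =>
      have hb : e (DirectSum.of _ β b) = (b : R) := by
        rw [he_apply, DirectSum.coeAddMonoidHom_of]
      rw [hb]
      have h1 : P α ((b : R)) = if α = β then (b : R) else 0 := hP_hom α β _ b.2
      have h2 : P α (f * (b : R)) = if α = β then f * (b : R) else 0 :=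
        hP_hom α β _ (hmul β f hf b b.2)
      rw [h1, h2]
      split <;> simp
    | add y z hy hz =>
      rw [map_add, mul_add, map_add, map_add, mul_add, hy, hz]
  -- choose the degrees of the sᵢ
  choose A hA using fun i => hmem (s i) (hs i)
  have hAinj : Function.Injective A := by
    intro i j hij
    by_contra hne
    exact hdist i j hne (hsep (s i) (hs i) (s j) (hs j) (A i) (hA i) (hij ▸ hA j))
  intro i
  -- the projection of r at degree A i is c i * s i
  have hproj : P (A i) (∑ j, c j * s j) = c i * s i := by
    rw [map_sum]
    rw [Finset.sum_eq_single i]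
    · rw [hP_hom (A i) (A i) _ (hmul (A i) (c i) (hc i) (s i) (hA i))]; simp
    · intro j _ hj
      rw [hP_hom (A i) (A j) _ (hmul (A j) (c j) (hc j) (s j) (hA j))]
      rw [if_neg (fun h => hj (hAinj h.symm))]
    · intro h; exact absurd (Finset.mem_univ i) h
  -- but the projection of any element of the right ideal stays in the right ideal
  obtain ⟨m, f, q, hfF, hrq⟩ := hr
  refine ⟨m, f, fun j => P (A i) (q j), hfF, ?_⟩
  rw [← hproj, hrq, map_sum]
  exact Finset.sum_congr rfl fun j _ => hP_mul (A i) (f j) (hF (hfF j)) (q j)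
end
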